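/- arXiv:1710.02956 — 6 statements merged into one kernel-verified Lean document; each statement's English description precedes it below -/
import Mathlib

section
/- For every k ∈ ℕ and every set S of positive integers, the exponential generating function of the generalized Stirling numbers of the second kind satisfies ∑_{n≥0} {n,k}_S z^n/n! = (1/k!)·(∑_{s∈S} z^s/s!)^k as formal power series over ℚ; that is, PowerSeries.mk (fun n => ({n,k}_S : ℚ)/n!) = ((k! : ℚ))⁻¹ • (PowerSeries.mk (fun s => if s ∈ S then ((s! : ℚ))⁻¹ else 0))^k. -/
/-- Generalized Stirling number of the second kind `{n,k}_S`: the number of set partitions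
of `{1,…,n}` into exactly `k` blocks, all of whose sizes lie in `S`. -/
noncomputable def stirling2 (S : Set ℕ) (n k : ℕ) : ℕ :=
  Nat.card {P : Finpartition (Finset.univ : Finset (Fin n)) //
    P.parts.card = k ∧ ∀ p ∈ P.parts, p.card ∈ S}

namespace StirlingAux
open Finset

variable {S : Set ℕ} [DecidablePred (· ∈ S)]

def fib {α : Type} [Fintype α] [DecidableEq α] {k : ℕ} (f : α → Fin k) (i : Fin k) :
    Finset α := univ.filter (f · = i)

lemma mem_fib {α : Type} [Fintype α] [DecidableEq α] {k : ℕ} {f : α → Fin k} {i : Fin k}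
    {x : α} : x ∈ fib f i ↔ f x = i := by simp [fib]

-- the key equiv for the recurrence
def recEquiv {n k : ℕ} (A : Finset (Fin n)) (hA : A.card ∈ S) :
    {f : Fin n → Fin (k+1) // (∀ i, (fib f i).card ∈ S) ∧ fib f (Fin.last k) = A} ≃
      {g : (↑(Aᶜ) : Type) → Fin k // ∀ i, (fib g i).card ∈ S} where
  toFun := fun ⟨f, hf, hfA⟩ => by
    have hne : ∀ x : (↑(Aᶜ) : Type), f x.1 ≠ Fin.last k := by
      rintro ⟨x, hx⟩ h
      rw [← hfA] at hx
      exact (mem_compl.1 hx) (mem_fib.2 h)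
    refine ⟨fun x => Fin.castPred (f x.1) (hne x), fun i => ?_⟩
    have : (fib (fun x : (↑(Aᶜ) : Type) => Fin.castPred (f x.1) (hne x)) i).card
        = (fib f i.castSucc).card := by
      apply Finset.card_bij (fun x _ => x.1)
      · rintro ⟨x, hx⟩ hxm
        rw [mem_fib] at hxm ⊢
        rw [← hxm, Fin.castSucc_castPred]
      · rintro ⟨x, hx⟩ _ ⟨y, hy⟩ _ h; exact Subtype.ext h
      · intro y hy
        rw [mem_fib] at hy
        have hyA : y ∈ Aᶜ := by
          rw [← hfA, mem_compl, mem_fib]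
          rw [hy]; exact fun h => (Fin.castSucc_lt_last i).ne h
        refine ⟨⟨y, hyA⟩, ?_, rfl⟩
        rw [mem_fib]
        simp [hy]
    rw [this]; exact hf i.castSucc
  invFun := fun ⟨g, hg⟩ => by
    refine ⟨fun x => if hx : x ∈ A then Fin.last k else (g ⟨x, mem_compl.2 hx⟩).castSucc,
      ?_, ?_⟩
    · have hlast : fib (fun x => if hx : x ∈ A then Fin.last k
          else (g ⟨x, mem_compl.2 hx⟩).castSucc) (Fin.last k) = A := by
        ext x
        rw [mem_fib]
        by_cases hx : x ∈ A <;> simp [hx, (Fin.castSucc_lt_last _).ne]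
      intro j
      induction j using Fin.lastCases with
      | last => rw [hlast]; exact hA
      | cast i =>
        have : (fib g i).card = (fib (fun x => if hx : x ∈ A then Fin.last k
            else (g ⟨x, mem_compl.2 hx⟩).castSucc) i.castSucc).card := by
          apply Finset.card_bij (fun x _ => x.1)
          · rintro ⟨x, hx⟩ hxm
            rw [mem_fib] at hxm ⊢
            rw [dif_neg (mem_compl.1 hx)]
            exact congrArg Fin.castSucc hxm
          · rintro ⟨x, hx⟩ _ ⟨y, hy⟩ _ h; exact Subtype.ext h
          · intro y hym
            rw [mem_fib] at hym
            by_cases h : y ∈ A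
            · rw [dif_pos h] at hym
              exact absurd hym.symm (Fin.castSucc_lt_last i).ne
            · rw [dif_neg h] at hym
              refine ⟨⟨y, mem_compl.2 h⟩, ?_, rfl⟩
              rw [mem_fib]
              exact Fin.castSucc_injective _ hym
        rw [← this]; exact hg i
    · ext x
      rw [mem_fib]
      by_cases hx : x ∈ A <;> simp [hx, (Fin.castSucc_lt_last _).ne]
  left_inv := by
    rintro ⟨f, hf, hfA⟩
    apply Subtype.ext
    funext x
    simp only
    by_cases hx : x ∈ A
    · rw [dif_pos hx]
      rw [← hfA, mem_fib] at hx
      exact hx.symm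
    · rw [dif_neg hx]
      exact Fin.castSucc_castPred _ _
  right_inv := by
    rintro ⟨g, hg⟩
    apply Subtype.ext
    funext ⟨x, hx⟩
    simp only
    have hxA : x ∉ A := mem_compl.1 hx
    simp only [dif_neg hxA, Fin.castPred_castSucc]

noncomputable def cnt (S : Set ℕ) [DecidablePred (· ∈ S)] (k n : ℕ) : ℕ :=
  Nat.card {f : Fin n → Fin k // ∀ i, (fib f i).card ∈ S}

lemma cnt_congr {α : Type} [Fintype α] [DecidableEq α] {k n : ℕ} (e : α ≃ Fin n) :
    Nat.card {f : α → Fin k // ∀ i, (fib f i).card ∈ S} = cnt S k n := by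
  apply Nat.card_congr
  refine Equiv.subtypeEquiv (Equiv.arrowCongr e (Equiv.refl _)) (fun f => ?_)
  have hc : ∀ i, (fib (Equiv.arrowCongr e (Equiv.refl (Fin k)) f) i).card = (fib f i).card := by
    intro i
    apply Finset.card_bij (fun x _ => e.symm x)
    · intro x hx
      simp only [fib, mem_filter, mem_univ, true_and] at hx ⊢
      simpa using hx
    · intro x _ y _ h; exact e.symm.injective h
    · intro y hy
      refine ⟨e y, ?_, by simp⟩
      simp only [fib, mem_filter, mem_univ, true_and] at hy ⊢
      simpa using hy
  exact ⟨fun h i => by rw [hc]; exact h i, fun h i => by rw [← hc]; exact h i⟩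

lemma cnt_zero (n : ℕ) : cnt S 0 n = if n = 0 then 1 else 0 := by
  rcases Nat.eq_zero_or_pos n with h | h
  · subst h
    rw [if_pos rfl]
    have : Unique {f : Fin 0 → Fin 0 // ∀ i, (fib f i).card ∈ S} :=
      ⟨⟨⟨finZeroElim, fun i => i.elim0⟩⟩, fun f => Subtype.ext (funext fun x => x.elim0)⟩
    exact Nat.card_unique
  · rw [if_neg h.ne']
    have : IsEmpty {f : Fin n → Fin 0 // ∀ i, (fib f i).card ∈ S} :=
      ⟨fun f => (f.1 ⟨0, h⟩).elim0⟩
    exact Nat.card_of_isEmpty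

lemma cnt_succ (k n : ℕ) :
    cnt S (k+1) n = ∑ A : Finset (Fin n), if A.card ∈ S then cnt S k (n - A.card) else 0 := by
  rw [cnt, Nat.card_eq_fintype_card,
    ← Fintype.card_congr (Equiv.sigmaFiberEquiv
      (fun f : {f : Fin n → Fin (k+1) // ∀ i, (fib f i).card ∈ S} => fib f.1 (Fin.last k))),
    Fintype.card_sigma]
  apply Finset.sum_congr rfl
  intro A _
  rw [← Nat.card_eq_fintype_card]
  have e1 : {x : {f : Fin n → Fin (k+1) // ∀ i, (fib f i).card ∈ S} // fib x.1 (Fin.last k) = A}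
      ≃ {f : Fin n → Fin (k+1) // (∀ i, (fib f i).card ∈ S) ∧ fib f (Fin.last k) = A} :=
    Equiv.subtypeSubtypeEquivSubtypeInter (fun f : Fin n → Fin (k+1) => ∀ i, (fib f i).card ∈ S)
      (fun f => fib f (Fin.last k) = A)
  rw [Nat.card_congr e1]
  by_cases hA : A.card ∈ S
  · rw [if_pos hA, Nat.card_congr (recEquiv A hA), cnt_congr ((Aᶜ).equivFin.trans (finCongr (by
      rw [card_compl, Fintype.card_fin])))]
  · rw [if_neg hA]
    have : IsEmpty {f : Fin n → Fin (k+1) // (∀ i, (fib f i).card ∈ S) ∧ fib f (Fin.last k) = A} :=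
      ⟨fun ⟨f, hf, hfA⟩ => hA (hfA ▸ hf (Fin.last k))⟩
    exact Nat.card_of_isEmpty

lemma sum_finsets_card (n : ℕ) (h : ℕ → ℕ) :
    ∑ A : Finset (Fin n), h A.card = ∑ a ∈ range (n+1), n.choose a * h a := by
  rw [← Finset.sum_fiberwise_of_maps_to' (g := fun A : Finset (Fin n) => A.card)
    (t := range (n+1)) (fun A _ => mem_range.2 (Nat.lt_succ_of_le (by
      simpa using card_le_univ A))) h]
  apply Finset.sum_congr rfl
  intro a _
  rw [Finset.sum_const, smul_eq_mul]
  congr 1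
  have : (univ.filter fun A : Finset (Fin n) => A.card = a) = powersetCard a univ := by
    ext A; simp [Finset.mem_powersetCard_univ]
  rw [this, Finset.card_powersetCard, card_univ, Fintype.card_fin]

lemma coeff_pow (k : ℕ) (n : ℕ) :
    PowerSeries.coeff n ((PowerSeries.mk fun s => if s ∈ S then ((s.factorial : ℚ))⁻¹ else 0) ^ k)
      = cnt S k n / n.factorial := by
  induction k generalizing n with
  | zero =>
    rw [pow_zero, cnt_zero, PowerSeries.coeff_one]
    split_ifs with h
    · simp [h]
    · simp
  | succ k ih =>
    rw [pow_succ', PowerSeries.coeff_mul, Finset.Nat.sum_antidiagonal_eq_sum_range_succ_mk]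
    simp only [PowerSeries.coeff_mk, ih]
    rw [cnt_succ, sum_finsets_card n (fun a => if a ∈ S then cnt S k (n - a) else 0)]
    push_cast
    rw [Finset.sum_div]
    apply Finset.sum_congr rfl
    intro a ha
    have hle : a ≤ n := Nat.lt_succ_iff.1 (mem_range.1 ha)
    split_ifs with h
    · rw [Nat.cast_choose ℚ hle]
      have h1 : (a.factorial : ℚ) ≠ 0 := Nat.cast_ne_zero.2 a.factorial_ne_zero
      have h2 : ((n-a).factorial : ℚ) ≠ 0 := Nat.cast_ne_zero.2 (n-a).factorial_ne_zero
      have h3 : (n.factorial : ℚ) ≠ 0 := Nat.cast_ne_zero.2 n.factorial_ne_zero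
      field_simp
    · simp

section PartOf
variable {n k : ℕ}

/-- The partition of `Fin n` into fibers of a coloring with nonempty fibers. -/
def partOf (f : Fin n → Fin k) (hf : ∀ i, (fib f i).Nonempty) :
    Finpartition (univ : Finset (Fin n)) where
  parts := univ.image (fib f)
  supIndep := by
    rw [Finset.supIndep_iff_pairwiseDisjoint]
    rintro p hp q hq hpq
    simp only [coe_image, coe_univ, Set.image_univ, Set.mem_range] at hp hq
    obtain ⟨i, rfl⟩ := hp
    obtain ⟨j, rfl⟩ := hq
    refine Finset.disjoint_left.2 fun x hxi hxj => hpq ?_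
    simp only [id_eq, mem_fib] at hxi hxj
    rw [← hxi, hxj]
  sup_parts := by
    apply le_antisymm (Finset.sup_le fun p _ => subset_univ p)
    intro x _
    rw [Finset.mem_sup]
    exact ⟨fib f (f x), mem_image_of_mem _ (mem_univ _), mem_fib.2 rfl⟩
  bot_notMem := by
    rw [bot_eq_empty, mem_image]
    rintro ⟨i, -, hi⟩
    exact (hf i).ne_empty hi

lemma partOf_parts (f : Fin n → Fin k) (hf : ∀ i, (fib f i).Nonempty) :
    (partOf f hf).parts = univ.image (fib f) := rfl

lemma fib_injective (f : Fin n → Fin k) (hf : ∀ i, (fib f i).Nonempty) :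
    Function.Injective (fib f) := by
  intro i j h
  obtain ⟨x, hx⟩ := hf i
  have hx' : x ∈ fib f j := h ▸ hx
  rw [mem_fib] at hx hx'
  rw [← hx, hx']

lemma partOf_card (f : Fin n → Fin k) (hf : ∀ i, (fib f i).Nonempty) :
    (partOf f hf).parts.card = k := by
  rw [partOf_parts, Finset.card_image_of_injective _ (fib_injective f hf), card_univ,
    Fintype.card_fin]

lemma partOf_part (f : Fin n → Fin k) (hf : ∀ i, (fib f i).Nonempty) (x : Fin n) :
    (partOf f hf).part x = fib f (f x) :=
  (partOf f hf).part_eq_of_mem (mem_image_of_mem _ (mem_univ _)) (mem_fib.2 rfl)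

end PartOf

section Count
variable {n k : ℕ}

lemma fib_nonempty {f : Fin n → Fin k} (hf : ∀ i, (fib f i).card ∈ S) (h0 : 0 ∉ S) :
    ∀ i, (fib f i).Nonempty := fun i =>
  Finset.card_pos.1 (Nat.pos_of_ne_zero (fun h => h0 (h ▸ hf i)))

/-- the fiber-partition map from good colorings to good partitions -/
noncomputable def Phi (h0 : 0 ∉ S) (x : {f : Fin n → Fin k // ∀ i, (fib f i).card ∈ S}) :
    {P : Finpartition (Finset.univ : Finset (Fin n)) //
      P.parts.card = k ∧ ∀ p ∈ P.parts, p.card ∈ S} := by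
  refine ⟨partOf x.1 (fib_nonempty x.2 h0), partOf_card _ _, fun p hp => ?_⟩
  rw [partOf_parts, mem_image] at hp
  obtain ⟨i, -, rfl⟩ := hp
  exact x.2 i

lemma keyfib {P : Finpartition (Finset.univ : Finset (Fin n))}
    (e : Fin k ≃ {p // p ∈ P.parts}) (i : Fin k) :
    fib (fun x => (e.symm ⟨P.part x, P.part_mem.2 (mem_univ x)⟩ : Fin k)) i = (e i).1 := by
  ext x
  rw [mem_fib, Equiv.symm_apply_eq]
  constructor
  · intro h
    have h2 : P.part x = (e i).1 := congrArg Subtype.val h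
    have := P.mem_part (mem_univ x)
    rwa [h2] at this
  · intro hx
    exact Subtype.ext (P.part_eq_of_mem (e i).2 hx)

noncomputable def fiberPhiEquiv (h0 : 0 ∉ S)
    (P : {P : Finpartition (Finset.univ : Finset (Fin n)) //
      P.parts.card = k ∧ ∀ p ∈ P.parts, p.card ∈ S}) :
    {x : {f : Fin n → Fin k // ∀ i, (fib f i).card ∈ S} // Phi h0 x = P} ≃
      (Fin k ≃ {p // p ∈ P.1.parts}) where
  toFun := fun ⟨⟨f, hf⟩, hP⟩ =>
    Equiv.ofBijective (fun i => ⟨fib f i, by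
      rw [← congrArg (fun z => z.1.parts) hP]
      exact mem_image_of_mem _ (mem_univ i)⟩)
      ⟨fun i j h => fib_injective f (fib_nonempty hf h0) (Subtype.ext_iff.1 h),
       by
        rintro ⟨p, hp⟩
        rw [← congrArg (fun z => z.1.parts) hP] at hp
        simp only [Phi, partOf_parts, mem_image] at hp
        obtain ⟨i, -, rfl⟩ := hp
        exact ⟨i, rfl⟩⟩
  invFun := fun e => by
    refine ⟨⟨fun x => e.symm ⟨P.1.part x, P.1.part_mem.2 (mem_univ x)⟩, fun i => by
      rw [keyfib e i]; exact P.2.2 _ (e i).2⟩, ?_⟩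
    apply Subtype.ext
    apply Finpartition.ext
    show univ.image _ = P.1.parts
    ext p
    rw [mem_image]
    constructor
    · rintro ⟨i, -, rfl⟩
      rw [keyfib e i]
      exact (e i).2
    · intro hp
      exact ⟨e.symm ⟨p, hp⟩, mem_univ _, by rw [keyfib, Equiv.apply_symm_apply]⟩
  left_inv := by
    rintro ⟨⟨f, hf⟩, hP⟩
    apply Subtype.ext
    apply Subtype.ext
    funext x
    show Equiv.symm _ _ = f x
    rw [Equiv.symm_apply_eq]
    apply Subtype.ext
    show P.1.part x = fib f (f x)
    have h1 : P.1 = partOf f (fib_nonempty hf h0) := (congrArg Subtype.val hP).symm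
    rw [h1, partOf_part]
  right_inv := by
    intro e
    apply Equiv.ext
    intro i
    apply Subtype.ext
    show fib _ i = (e i).1
    exact keyfib e i

end Count

lemma cnt_eq (h0 : 0 ∉ S) (k n : ℕ) : cnt S k n = k.factorial * stirling2 S n k := by
  classical
  rw [cnt, Nat.card_congr (Equiv.sigmaFiberEquiv (Phi (n := n) (k := k) h0)).symm,
    Nat.card_eq_fintype_card, Fintype.card_sigma]
  have hP : ∀ P : {P : Finpartition (Finset.univ : Finset (Fin n)) //
      P.parts.card = k ∧ ∀ p ∈ P.parts, p.card ∈ S},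
      Fintype.card {x // Phi h0 x = P} = k.factorial := by
    intro P
    rw [← Nat.card_eq_fintype_card, Nat.card_congr (fiberPhiEquiv h0 P),
      Nat.card_eq_fintype_card, Fintype.card_equiv
        (Fintype.equivFinOfCardEq (by rw [Fintype.card_coe, P.2.1])).symm, Fintype.card_fin]
  rw [Finset.sum_congr rfl (fun P _ => hP P), Finset.sum_const, smul_eq_mul, card_univ,
    stirling2, Nat.card_eq_fintype_card, Nat.mul_comm]

end StirlingAux

theorem statement1 (S : Set ℕ) [DecidablePred (· ∈ S)] (hS : 0 ∉ S) (k : ℕ) :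
    PowerSeries.mk (fun n => (stirling2 S n k : ℚ) / n.factorial) =
      ((k.factorial : ℚ))⁻¹ •
        (PowerSeries.mk fun s => if s ∈ S then ((s.factorial : ℚ))⁻¹ else 0) ^ k := by
  ext n
  rw [PowerSeries.coeff_mk, map_smul, smul_eq_mul, StirlingAux.coeff_pow,
    StirlingAux.cnt_eq hS]
  have h1 : (k.factorial : ℚ) ≠ 0 := Nat.cast_ne_zero.2 k.factorial_ne_zero
  push_cast
  field_simp
end

section
/- For every set S of positive integers, the exponential generating function of the generalized factorial numbers satisfies ∑_{n≥0} A_{n,S} z^n/n! = exp(∑_{s∈S} z^s/s) as formal power series over ℚ; that is, PowerSeries.mk (fun n => (A_{n,S} : ℚ)/n!) equals the substitution of the power series F := PowerSeries.mk (fun s => if s ∈ S then (s : ℚ)⁻¹ else 0) (which has zero constant term since 0 ∉ S) into the exponential power series PowerSeries.exp ℚ. -/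
/-- Generalized factorial number `A_{n,S}`: the number of permutations of `{1,…,n}`
all of whose cycle lengths lie in `S` (fixed points counting as cycles of length 1). -/
noncomputable def genA (S : Set ℕ) (n : ℕ) : ℕ :=
  Nat.card {σ : Equiv.Perm (Fin n) // ∀ x, Function.minimalPeriod σ x ∈ S}

/-- Formal substitution of a power series `g` (with zero constant term) into a power
series `f`: the `n`-th coefficient of `f(g)` is `∑_{k ≤ n} (coeff k f) · (coeff n (g^k))`,
which agrees with the usual substitution of power series when `g` has zero constant term. -/
noncomputable def psSubst (g f : PowerSeries ℚ) : PowerSeries ℚ :=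
  PowerSeries.mk fun n => ∑ k ∈ Finset.range (n + 1),
    PowerSeries.coeff (R := ℚ) k f * PowerSeries.coeff (R := ℚ) n (g ^ k)

open Equiv Equiv.Perm Function Finset

lemma minimalPeriod_congr {α β : Type*} {f : α → α} {g : β → β} {x : α} {y : β}
    (h : ∀ n : ℕ, f^[n] x = x ↔ g^[n] y = y) :
    Function.minimalPeriod f x = Function.minimalPeriod g y := by
  rw [Function.minimalPeriod_eq_minimalPeriod_iff]; exact h

-- the fiber bijection core lemma
lemma fiber_card (S : Set ℕ) [DecidablePred (· ∈ S)] {n s : ℕ} (hs1 : 1 ≤ s) (hs2 : s ≤ n + 1)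
    (hsS : s ∈ S) (g : Fin (s - 1) → Fin (n + 1)) (hginj : Function.Injective g)
    (hgne : ∀ i, g i ≠ Fin.last n) :
    ((univ.filter (fun σ : Equiv.Perm (Fin (n+1)) =>
        (∀ x, Function.minimalPeriod σ x ∈ S) ∧
        Function.minimalPeriod σ (Fin.last n) = s ∧
        ∀ i : Fin (s-1), (σ ^ ((i : ℕ) + 1)) (Fin.last n) = g i)).card =
      (univ.filter (fun τ : Equiv.Perm {x : Fin (n+1) // x ∉ (Fin.last n :: List.ofFn g)} =>
        ∀ y, Function.minimalPeriod τ y ∈ S)).card) := by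
  classical
  set ℓ : Fin (n+1) := Fin.last n with hℓ
  set C : List (Fin (n+1)) := ℓ :: List.ofFn g with hCdef
  have hlen : C.length = s := by
    simp [hCdef, List.length_ofFn]
    omega
  have hnodup : C.Nodup := by
    rw [hCdef, List.nodup_cons]
    constructor
    · intro hmem
      obtain ⟨i, hi⟩ := List.mem_ofFn.1 hmem
      exact hgne i hi
    · exact List.nodup_ofFn.2 hginj
  set c : Equiv.Perm (Fin (n+1)) := C.formPerm with hcdef
  have hℓC : ℓ ∈ C := by simp [hCdef]
  -- basic getElem facts
  have hget0 : C[0]'(by omega) = ℓ := rfl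
  have hgets : ∀ i : Fin (s-1), C[(i:ℕ)+1]'(by rw [hlen]; omega) = g i := by
    intro i
    simp [hCdef, List.getElem_ofFn]
  have hcfix : ∀ x, x ∉ C → c x = x := fun x hx => List.formPerm_apply_of_notMem hx
  have hcfixpow : ∀ (k : ℕ) x, x ∉ C → (c ^ k) x = x := by
    intro k x hx
    rw [← Equiv.Perm.iterate_eq_pow]
    exact Function.IsFixedPt.iterate (hcfix x hx) k
  have hcinvfix : ∀ x, x ∉ C → c⁻¹ x = x := by
    intro x hx
    rw [Equiv.Perm.inv_eq_iff_eq]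
    exact (hcfix x hx).symm
  -- minimal period of c on C is s
  have hmpc : ∀ x ∈ C, Function.minimalPeriod c x = s := by
    intro x hx
    obtain ⟨i, hi, rfl⟩ := List.mem_iff_getElem.1 hx
    have hper : ∀ k : ℕ, Function.IsPeriodicPt (⇑c) k (C[i]'hi) ↔ s ∣ k := by
      intro k
      have hck : (⇑c)^[k] (C[i]'hi) = (c ^ k) (C[i]'hi) := rfl
      have := List.formPerm_pow_apply_getElem C hnodup k i hi
      constructor
      · intro hp
        have heq : C[(i + k) % C.length]'(Nat.mod_lt _ (i.zero_le.trans_lt hi)) = C[i]'hi := by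
          rw [← this]
          exact hp
        have hmod : (i + k) % C.length = i := (hnodup.getElem_inj_iff).1 heq
        rw [hlen] at hmod
        have hile : i % s = i := Nat.mod_eq_of_lt (by omega)
        have : i ≡ i + k [MOD s] := by
          unfold Nat.ModEq
          rw [hmod, hile]
        have := (Nat.modEq_iff_dvd' (Nat.le_add_right i k)).1 this
        simpa using this
      · intro hk
        obtain ⟨m, rfl⟩ := hk
        show (⇑c)^[s*m] (C[i]'hi) = (C[i]'hi)
        rw [hck, this]
        have hmod : (i + s * m) % C.length = i := by
          rw [hlen, Nat.add_mul_mod_self_left, Nat.mod_eq_of_lt (by omega)]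
        simp only [hmod]
    have h1 : Function.minimalPeriod (⇑c) (C[i]'hi) ∣ s :=
      Function.IsPeriodicPt.minimalPeriod_dvd ((hper s).2 dvd_rfl)
    have h2 : s ∣ Function.minimalPeriod (⇑c) (C[i]'hi) :=
      (hper _).1 (Function.isPeriodicPt_minimalPeriod _ _)
    exact Nat.dvd_antisymm h1 h2
  -- facts about σ satisfying the conditions
  have hF1 : ∀ (σ : Equiv.Perm (Fin (n+1))),
      (∀ i : Fin (s-1), (σ ^ ((i : ℕ) + 1)) ℓ = g i) →
      ∀ k (hk : k < s), (σ ^ k) ℓ = C[k]'(by omega) := by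
    intro σ hθ k hk
    match k with
    | 0 => simpa using hget0.symm
    | (i+1) =>
      have hi : i < s - 1 := by omega
      simpa using (hθ ⟨i, hi⟩).trans (hgets ⟨i, hi⟩).symm
  have hF2 : ∀ (σ : Equiv.Perm (Fin (n+1))), Function.minimalPeriod σ ℓ = s → (σ ^ s) ℓ = ℓ := by
    intro σ h
    have := Function.isPeriodicPt_minimalPeriod (⇑σ) ℓ
    rw [h] at this
    exact this
  have hkey : ∀ σ : Equiv.Perm (Fin (n+1)),
      Function.minimalPeriod σ ℓ = s →
      (∀ i : Fin (s-1), (σ ^ ((i : ℕ) + 1)) ℓ = g i) →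
      (∀ x ∈ C, σ x = c x) ∧ (∀ x, x ∈ C ↔ σ x ∈ C) := by
    intro σ hmp hθ
    have hstep : ∀ k (hk : k < s), σ (C[k]'(by omega)) =
        C[(k+1) % s]'(by rw [hlen]; exact Nat.mod_lt _ (by omega)) := by
      intro k hk
      have h1 : σ (C[k]'(by omega)) = (σ ^ (k+1)) ℓ := by
        rw [← hF1 σ hθ k hk, pow_succ', Equiv.Perm.mul_apply]
      rcases Nat.lt_or_ge (k+1) s with h | h
      · rw [h1, hF1 σ hθ (k+1) h]
        have : (k+1) % s = k + 1 := Nat.mod_eq_of_lt h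
        simp only [this]
      · have hks : k + 1 = s := by omega
        rw [h1, hks, hF2 σ hmp]
        have : s % s = 0 := Nat.mod_self s
        simp only [hks, this, hget0]
    have hagree : ∀ x ∈ C, σ x = c x := by
      intro x hx
      obtain ⟨k, hk, rfl⟩ := List.mem_iff_getElem.1 hx
      have hk' : k < s := by omega
      rw [hstep k hk', hcdef, List.formPerm_apply_getElem C hnodup k hk]
      simp only [hlen]
    have hmem : ∀ x, x ∈ C ↔ σ x ∈ C := by
      intro x
      constructor
      · intro hx
        rw [hagree x hx]
        exact List.formPerm_apply_mem_of_mem hx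
      · intro hx
        obtain ⟨k, hk, hσx⟩ := List.mem_iff_getElem.1 hx
        have hk' : k < s := by omega
        match k with
        | 0 =>
          have h0 : σ x = (σ ^ s) ℓ := by
            rw [hF2 σ hmp, ← hget0]; exact hσx.symm
          have hs1' : s - 1 < s := by omega
          have hpow : σ ^ s = σ * σ ^ (s - 1) := by
            rw [← pow_succ']; congr 1; omega
          have heq : σ x = σ ((σ ^ (s-1)) ℓ) := by
            rw [h0, hpow, Equiv.Perm.mul_apply]
          have hx' : x = (σ ^ (s-1)) ℓ := σ.injective heq
          rw [hx', hF1 σ hθ (s-1) hs1']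
          exact List.getElem_mem _
        | (j+1) =>
          have hj : j < s := by omega
          have heq : σ x = σ ((σ ^ j) ℓ) := by
            have h0 : σ x = (σ ^ (j+1)) ℓ := by
              rw [← hσx]; exact (hF1 σ hθ (j+1) hk').symm
            rw [h0, pow_succ', Equiv.Perm.mul_apply]
          have hx' : x = (σ ^ j) ℓ := σ.injective heq
          rw [hx', hF1 σ hθ j hj]
          exact List.getElem_mem _
    exact ⟨hagree, hmem⟩
  -- forward facts
  have hforward : ∀ σ : Equiv.Perm (Fin (n+1)), (∀ x ∈ C, σ x = c x) → (∀ x, x ∈ C ↔ σ x ∈ C) →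
      (∀ x ∈ C, (c⁻¹ * σ) x = x) ∧ (∀ x, x ∉ C ↔ (c⁻¹ * σ) x ∉ C) ∧
      (∀ k x, x ∉ C → ((c⁻¹ * σ) ^ k) x = (σ ^ k) x) := by
    intro σ hag hmem
    have hd1 : ∀ x ∈ C, (c⁻¹ * σ) x = x := by
      intro x hx
      rw [Equiv.Perm.mul_apply, hag x hx, Equiv.Perm.inv_def, Equiv.symm_apply_apply]
    have hd2 : ∀ x, x ∉ C → (c⁻¹ * σ) x = σ x := by
      intro x hx
      have hσx : σ x ∉ C := fun hc => hx ((hmem x).2 hc)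
      rw [Equiv.Perm.mul_apply, hcinvfix _ hσx]
    have hiff : ∀ x, x ∉ C ↔ (c⁻¹ * σ) x ∉ C := by
      intro x
      by_cases hx : x ∈ C
      · simp [hx, hd1 x hx]
      · have hσx : σ x ∉ C := fun hc => hx ((hmem x).2 hc)
        simp [hx, hd2 x hx, hσx]
    refine ⟨hd1, hiff, ?_⟩
    intro k
    induction k with
    | zero => intro x hx; simp
    | succ k ih =>
      intro x hx
      have hσx : σ x ∉ C := fun hc => hx ((hmem x).2 hc)
      calc ((c⁻¹ * σ) ^ (k+1)) x = ((c⁻¹ * σ) ^ k) ((c⁻¹ * σ) x) := by rw [pow_succ]; rfl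
        _ = ((c⁻¹ * σ) ^ k) (σ x) := by rw [hd2 x hx]
        _ = (σ ^ k) (σ x) := ih (σ x) hσx
        _ = (σ ^ (k+1)) x := by rw [pow_succ]; rfl
  have hcpow : ∀ k (hk : k < s), (c ^ k) ℓ = C[k]'(by omega) := by
    intro k hk
    have h0 := List.formPerm_pow_apply_getElem C hnodup k 0 (by omega)
    have hm : (0 + k) % C.length = k := by
      rw [hlen, Nat.zero_add]; exact Nat.mod_eq_of_lt hk
    simp only [hm] at h0
    rw [← hcdef] at h0
    rw [← h0]
    exact congrArg _ hget0.symm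
  -- backward facts
  have hbackward : ∀ τ : Equiv.Perm {x : Fin (n+1) // x ∉ C},
      (∀ k x, x ∈ C → ((c * Equiv.Perm.ofSubtype τ) ^ k) x = (c ^ k) x) ∧
      (∀ k x (hx : x ∉ C), ((c * Equiv.Perm.ofSubtype τ) ^ k) x = ((τ ^ k) ⟨x, hx⟩ : _)) := by
    intro τ
    set t : Equiv.Perm (Fin (n+1)) := Equiv.Perm.ofSubtype τ with htdef
    have ht2 : ∀ x (hx : x ∉ C), t x = ↑(τ ⟨x, hx⟩) := by
      intro x hx
      exact Equiv.Perm.ofSubtype_apply_of_mem τ hx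
    have ht3 : ∀ x, x ∉ C → t x ∉ C := by
      intro x hx
      rw [ht2 x hx]
      exact (τ ⟨x, hx⟩).2
    have hcomm : Commute c t := by
      apply Equiv.ext
      intro x
      by_cases hx : x ∈ C
      · rw [Equiv.Perm.mul_apply, Equiv.Perm.mul_apply,
          Equiv.Perm.ofSubtype_apply_of_not_mem τ (not_not_intro hx),
          Equiv.Perm.ofSubtype_apply_of_not_mem τ
            (not_not_intro (List.formPerm_apply_mem_of_mem hx))]
      · rw [Equiv.Perm.mul_apply, Equiv.Perm.mul_apply, hcfix x hx, hcfix _ (ht3 x hx)]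
    have htpow : ∀ k : ℕ, t ^ k = Equiv.Perm.ofSubtype (τ ^ k) := by
      intro k
      rw [htdef, ← map_pow]
    constructor
    · intro k x hx
      rw [hcomm.mul_pow, Equiv.Perm.mul_apply, htpow,
        Equiv.Perm.ofSubtype_apply_of_not_mem (τ ^ k) (not_not_intro hx)]
    · intro k x hx
      rw [hcomm.mul_pow, Equiv.Perm.mul_apply, htpow,
        Equiv.Perm.ofSubtype_apply_of_mem (τ ^ k) hx]
      exact hcfixpow k _ ((τ ^ k) ⟨x, hx⟩).2
  have hcond : ∀ σ : Equiv.Perm (Fin (n+1)),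
      Function.minimalPeriod σ ℓ = s →
      (∀ i : Fin (s-1), (σ ^ ((i : ℕ) + 1)) ℓ = g i) →
      ∀ x, x ∉ C ↔ (c⁻¹ * σ) x ∉ C := by
    intro σ hmp hθ
    obtain ⟨hag, hmem⟩ := hkey σ hmp hθ
    exact (hforward σ hag hmem).2.1
  refine Finset.card_bij'
    (fun σ hσ => Equiv.Perm.subtypePerm (c⁻¹ * σ)
      (fun x => (hcond σ (Finset.mem_filter.1 hσ).2.2.1 (Finset.mem_filter.1 hσ).2.2.2 x).symm))
    (fun τ _ => c * Equiv.Perm.ofSubtype τ) ?_ ?_ ?_ ?_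
  · -- forward lands in B
    intro σ hσ
    obtain ⟨hgood, hmp, hθ⟩ := (Finset.mem_filter.1 hσ).2
    obtain ⟨hag, hmem⟩ := hkey σ hmp hθ
    obtain ⟨hd1, hiff, hdpow⟩ := hforward σ hag hmem
    rw [Finset.mem_filter]
    refine ⟨Finset.mem_univ _, fun y => ?_⟩
    have heq : ∀ (h : ∀ x, (c⁻¹ * σ) x ∉ C ↔ x ∉ C) (y : {x : Fin (n+1) // x ∉ C}),
        Function.minimalPeriod (⇑(Equiv.Perm.subtypePerm (c⁻¹ * σ) h)) y =
        Function.minimalPeriod (⇑σ) (y : Fin (n+1)) := by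
      intro h y
      apply minimalPeriod_congr
      intro k
      show ((Equiv.Perm.subtypePerm (c⁻¹ * σ) h) ^ k) y = y ↔ (σ ^ k) (y : Fin (n+1)) = ↑y
      have hv : ((((c⁻¹ * σ).subtypePerm h) ^ k) y : Fin (n+1)) = (σ ^ k) ↑y := by
        rw [Equiv.Perm.subtypePerm_pow]
        exact hdpow k ↑y y.2
      rw [Subtype.ext_iff, hv]
    rw [heq]
    exact hgood _
  · -- backward lands in A
    intro τ hτ
    have hgoodτ := fun y => (Finset.mem_filter.1 hτ).2 y
    obtain ⟨G1, G2⟩ := hbackward τ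
    have hmpC : ∀ x ∈ C, Function.minimalPeriod (⇑(c * Equiv.Perm.ofSubtype τ)) x = s := by
      intro x hx
      rw [← hmpc x hx]
      apply minimalPeriod_congr
      intro k
      show ((c * Equiv.Perm.ofSubtype τ) ^ k) x = x ↔ (c ^ k) x = x
      rw [G1 k x hx]
    rw [Finset.mem_filter]
    refine ⟨Finset.mem_univ _, fun x => ?_, hmpC ℓ hℓC, fun i => ?_⟩
    · by_cases hx : x ∈ C
      · rw [hmpC x hx]; exact hsS
      · have heq2 : Function.minimalPeriod (⇑(c * Equiv.Perm.ofSubtype τ)) x =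
            Function.minimalPeriod (⇑τ) ⟨x, hx⟩ := by
          apply minimalPeriod_congr
          intro k
          show ((c * Equiv.Perm.ofSubtype τ) ^ k) x = x ↔
            ((τ ^ k) ⟨x, hx⟩ : {x : Fin (n+1) // x ∉ C}) = ⟨x, hx⟩
          rw [G2 k x hx, Subtype.ext_iff]
        rw [heq2]
        exact hgoodτ _
    · have hilt : (i : ℕ) < s - 1 := i.isLt
      rw [G1 _ ℓ hℓC, hcpow ((i : ℕ) + 1) (by omega), hgets i]
  · -- left inverse
    intro σ hσ
    obtain ⟨hgood, hmp, hθ⟩ := (Finset.mem_filter.1 hσ).2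
    obtain ⟨hag, hmem⟩ := hkey σ hmp hθ
    have hd1 := (hforward σ hag hmem).1
    have h₂ : ∀ x, (c⁻¹ * σ) x ≠ x → x ∉ C := by
      intro x hne hx
      exact hne (hd1 x hx)
    show c * Equiv.Perm.ofSubtype ((c⁻¹ * σ).subtypePerm _) = σ
    rw [Equiv.Perm.ofSubtype_subtypePerm _ h₂, mul_inv_cancel_left]
  · -- right inverse
    intro τ hτ
    apply Equiv.ext
    intro y
    apply Subtype.ext
    show ((c⁻¹ * (c * Equiv.Perm.ofSubtype τ)) (y : Fin (n+1))) = ↑(τ y)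
    rw [inv_mul_cancel_left]
    exact Equiv.Perm.ofSubtype_apply_coe τ y

lemma genA_eq_card (S : Set ℕ) (α : Type*) [Fintype α] :
    Nat.card {σ : Equiv.Perm α // ∀ x, Function.minimalPeriod σ x ∈ S} =
      genA S (Fintype.card α) := by
  obtain e := Fintype.equivFin α
  apply Nat.card_congr
  refine Equiv.subtypeEquiv e.permCongr (fun σ => ?_)
  have key : ∀ (x : α), Function.minimalPeriod ⇑(e.permCongr σ) (e x) =
      Function.minimalPeriod ⇑σ x := by
    intro x
    refine (minimalPeriod_congr fun n => ?_).symm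
    have hh : ∀ n : ℕ, (⇑(e.permCongr σ))^[n] (e x) = e (σ^[n] x) := by
      intro n
      induction n with
      | zero => simp
      | succ n ih => rw [Function.iterate_succ_apply', ih, Function.iterate_succ_apply',
          Equiv.permCongr_apply, Equiv.symm_apply_apply]
    rw [hh]
    exact ⟨fun h2 => by rw [h2], fun h2 => e.injective h2⟩
  constructor
  · intro h y
    have := key (e.symm y)
    rw [Equiv.apply_symm_apply] at this
    rw [this]; exact h _
  · intro h x
    rw [← key x]; exact h _

lemma genA_succ (S : Set ℕ) [DecidablePred (· ∈ S)] (hS : 0 ∉ S) (n : ℕ) :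
    genA S (n + 1) = ∑ s ∈ Finset.range (n + 2),
      if s ∈ S then Nat.descFactorial n (s - 1) * genA S (n + 1 - s) else 0 := by
  classical
  set ℓ : Fin (n+1) := Fin.last n with hℓ
  have hA : genA S (n+1) = (univ.filter (fun σ : Equiv.Perm (Fin (n+1)) =>
      ∀ x, Function.minimalPeriod σ x ∈ S)).card := by
    rw [genA, Nat.card_eq_fintype_card, Fintype.card_subtype]
  have hmp_le : ∀ (σ : Equiv.Perm (Fin (n+1))) x,
      Function.minimalPeriod σ x ≤ n + 1 := by
    intro σ x
    have h2 : (Finset.range (Function.minimalPeriod ⇑σ x)).card ≤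
        (univ : Finset (Fin (n+1))).card := by
      apply Finset.card_le_card_of_injOn (fun k => (⇑σ)^[k] x) (fun k _ => Finset.mem_univ _)
      rw [Finset.coe_range]
      exact Function.iterate_injOn_Iio_minimalPeriod
    simpa using h2
  rw [hA, Finset.card_eq_sum_card_fiberwise
    (f := fun σ : Equiv.Perm (Fin (n+1)) => Function.minimalPeriod ⇑σ ℓ) (t := Finset.range (n+2))
    (fun σ _ => Finset.mem_range.2 (by
      show Function.minimalPeriod ⇑σ ℓ < n + 2
      have := hmp_le σ ℓ; omega))]
  apply Finset.sum_congr rfl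
  intro s hs
  rw [Finset.mem_range] at hs
  by_cases hsS : s ∈ S
  swap
  · rw [if_neg hsS, Finset.card_eq_zero, Finset.filter_filter, Finset.filter_eq_empty_iff]
    rintro σ - ⟨hgood, hmp⟩
    exact hsS (hmp ▸ hgood ℓ)
  rw [if_pos hsS]
  have hs1 : 1 ≤ s := Nat.pos_of_ne_zero (by rintro rfl; exact hS hsS)
  have hs2 : s ≤ n + 1 := by omega
  rw [Finset.filter_filter]
  rw [Finset.card_eq_sum_card_fiberwise
    (f := fun (σ : Equiv.Perm (Fin (n+1))) (i : Fin (s-1)) => (σ ^ ((i:ℕ)+1)) ℓ)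
    (t := (univ : Finset (Fin (s-1) → Fin (n+1)))) (fun σ _ => Finset.mem_univ _)]
  have hfib : ∀ g : Fin (s-1) → Fin (n+1),
      ((univ.filter (fun σ : Equiv.Perm (Fin (n+1)) =>
          (∀ x, Function.minimalPeriod (⇑σ) x ∈ S) ∧
          Function.minimalPeriod (⇑σ) ℓ = s)).filter
        (fun σ => (fun i : Fin (s-1) => (σ ^ ((i:ℕ)+1)) ℓ) = g)).card
      = if Function.Injective g ∧ ∀ i, g i ≠ ℓ then genA S (n + 1 - s) else 0 := by
    intro g
    by_cases hP : Function.Injective g ∧ ∀ i, g i ≠ ℓ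
    · rw [if_pos hP]
      have hshape : ((univ.filter (fun σ : Equiv.Perm (Fin (n+1)) =>
          (∀ x, Function.minimalPeriod (⇑σ) x ∈ S) ∧
          Function.minimalPeriod (⇑σ) ℓ = s)).filter
            (fun σ => (fun i : Fin (s-1) => (σ ^ ((i:ℕ)+1)) ℓ) = g)) =
          (univ.filter (fun σ : Equiv.Perm (Fin (n+1)) =>
            (∀ x, Function.minimalPeriod (⇑σ) x ∈ S) ∧
            Function.minimalPeriod (⇑σ) ℓ = s ∧
            ∀ i : Fin (s-1), (σ ^ ((i : ℕ) + 1)) ℓ = g i)) := by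
        ext σ
        simp only [Finset.mem_filter, Finset.mem_univ, true_and, funext_iff, and_assoc]
      rw [hshape, fiber_card S hs1 hs2 hsS g hP.1 hP.2]
      -- now show B-card = genA S (n + 1 - s)
      set C : List (Fin (n+1)) := ℓ :: List.ofFn g with hCdef
      have hnodup : C.Nodup := by
        rw [hCdef, List.nodup_cons]
        refine ⟨fun hmem => ?_, List.nodup_ofFn.2 hP.1⟩
        obtain ⟨i, hi⟩ := List.mem_ofFn.1 hmem
        exact hP.2 i hi
      have h1 : (univ.filter (fun τ : Equiv.Perm {x : Fin (n+1) // x ∉ C} =>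
          ∀ y, Function.minimalPeriod (⇑τ) y ∈ S)).card
          = Nat.card {τ : Equiv.Perm {x : Fin (n+1) // x ∉ C} //
              ∀ y, Function.minimalPeriod (⇑τ) y ∈ S} := by
        rw [Nat.card_eq_fintype_card, Fintype.card_subtype]
      rw [h1, genA_eq_card]
      congr 1
      have hsub : Fintype.card {x : Fin (n+1) // x ∈ C} = s := by
        rw [Fintype.card_of_subtype C.toFinset (fun x => by simp),
          List.toFinset_card_of_nodup hnodup]
        simp [hCdef]
        omega
      rw [Fintype.card_subtype_compl, hsub, Fintype.card_fin]
    · rw [if_neg hP, Finset.card_eq_zero, Finset.filter_eq_empty_iff]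
      intro σ hσ
      have hmem := Finset.mem_filter.1 hσ
      obtain ⟨hgood, hmp⟩ := hmem.2
      intro hg
      apply hP
      have hinj := Function.iterate_injOn_Iio_minimalPeriod (f := ⇑σ) (x := ℓ)
      rw [hmp] at hinj
      have hval : ∀ i : Fin (s-1), (⇑σ)^[(i:ℕ)+1] ℓ = g i := by
        intro i
        rw [Equiv.Perm.iterate_eq_pow]
        exact congrFun hg i
      constructor
      · intro i j hij
        have h1 : ((i:ℕ)+1) ∈ Set.Iio s := by
          simp only [Set.mem_Iio]; have := i.isLt; omega
        have h2 : ((j:ℕ)+1) ∈ Set.Iio s := by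
          simp only [Set.mem_Iio]; have := j.isLt; omega
        have := hinj h1 h2 (by
          show (⇑σ)^[(i:ℕ)+1] ℓ = (⇑σ)^[(j:ℕ)+1] ℓ
          rw [hval i, hval j, hij])
        exact Fin.ext (by omega)
      · intro i hi
        have h1 : ((i:ℕ)+1) ∈ Set.Iio s := by
          simp only [Set.mem_Iio]; have := i.isLt; omega
        have h0 : (0:ℕ) ∈ Set.Iio s := by simp only [Set.mem_Iio]; omega
        have := hinj h1 h0 (by
          show (⇑σ)^[(i:ℕ)+1] ℓ = (⇑σ)^[0] ℓ
          rw [hval i, hi]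
          rfl)
        omega
  rw [Finset.sum_congr rfl (fun g _ => hfib g), Finset.sum_ite, Finset.sum_const,
    Finset.sum_const_zero, add_zero, smul_eq_mul]
  congr 1
  rw [← Fintype.card_subtype]
  have e : {g : Fin (s-1) → Fin (n+1) // Function.Injective g ∧ ∀ i, g i ≠ ℓ} ≃
      (Fin (s-1) ↪ {x : Fin (n+1) // x ≠ ℓ}) :=
    { toFun := fun g => ⟨fun i => ⟨g.1 i, g.2.2 i⟩, fun i j h => g.2.1 (congrArg Subtype.val h)⟩
      invFun := fun f => ⟨fun i => (f i : Fin (n+1)),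
        ⟨fun i j h => f.injective (Subtype.ext h), fun i => (f i).2⟩⟩
      left_inv := fun g => rfl
      right_inv := fun f => rfl }
  rw [Fintype.card_congr e, Fintype.card_embedding_eq, Fintype.card_fin]
  congr 1
  have : Fintype.card {x : Fin (n+1) // x = ℓ} = 1 := Fintype.card_subtype_eq ℓ
  rw [Fintype.card_subtype_compl, this, Fintype.card_fin]
  omega

lemma genA_zero (S : Set ℕ) : genA S 0 = 1 := by
  classical
  rw [genA, Nat.card_eq_fintype_card, Fintype.card_subtype,
    Finset.filter_true_of_mem (fun σ _ => fun x => x.elim0)]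
  simp [Fintype.card_perm]

open PowerSeries

lemma coeff_pow_eq_zero' {f : PowerSeries ℚ} (hf : constantCoeff f = 0) :
    ∀ {k m : ℕ}, m < k → coeff m (f ^ k) = 0 := by
  intro k
  induction k with
  | zero => intro m h; omega
  | succ k ih =>
    intro m h
    rw [pow_succ, coeff_mul]
    apply Finset.sum_eq_zero
    intro p hp
    rw [Finset.HasAntidiagonal.mem_antidiagonal] at hp
    by_cases hpk : p.1 < k
    · rw [ih hpk, zero_mul]
    · have h2 : p.2 = 0 := by omega
      rw [h2, coeff_zero_eq_constantCoeff, hf, mul_zero]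

theorem statement2 (S : Set ℕ) [DecidablePred (· ∈ S)] (hS : 0 ∉ S) :
    PowerSeries.mk (fun n => (genA S n : ℚ) / n.factorial) =
      psSubst (PowerSeries.mk fun s => if s ∈ S then (s : ℚ)⁻¹ else 0)
        (PowerSeries.exp ℚ) := by
  classical
  set F : PowerSeries ℚ := PowerSeries.mk fun s => if s ∈ S then (s : ℚ)⁻¹ else 0 with hF
  have hF0 : constantCoeff F = 0 := by
    rw [← coeff_zero_eq_constantCoeff, hF, coeff_mk, if_neg hS]
  set b : ℕ → ℚ := fun m => ∑ k ∈ Finset.range (m+1),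
    coeff k (exp ℚ) * coeff m (F ^ k) with hb
  have hexp : ∀ k : ℕ, coeff k (exp ℚ) = ((k.factorial : ℚ))⁻¹ := by
    intro k
    rw [coeff_exp, Algebra.algebraMap_self, RingHom.id_apply, one_div]
  have hdF : ∀ j : ℕ, coeff j (d⁄dX ℚ F) = if (j+1) ∈ S then (1:ℚ) else 0 := by
    intro j
    rw [coeff_derivative, hF, coeff_mk]
    split_ifs with h
    · have h1 : ((j:ℚ)+1) ≠ 0 := by positivity
      push_cast
      field_simp
    · rw [zero_mul]
  have hbrec : ∀ m : ℕ, ((m:ℚ)+1) * b (m+1) =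
      ∑ j ∈ Finset.range (m+1), (if (j+1) ∈ S then (1:ℚ) else 0) * b (m - j) := by
    intro m
    have e1 : ((m:ℚ)+1) * b (m+1) =
        ∑ k ∈ Finset.range (m+2), coeff k (exp ℚ) * coeff m (d⁄dX ℚ (F ^ k)) := by
      rw [hb, Finset.mul_sum]
      apply Finset.sum_congr rfl
      intro k _
      rw [coeff_derivative]
      ring
    rw [e1, Finset.sum_range_succ']
    have e0 : coeff 0 (exp ℚ) * coeff m (d⁄dX ℚ ((F : PowerSeries ℚ) ^ 0)) = 0 := by
      rw [pow_zero]
      simp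
    rw [e0, add_zero]
    have e2 : ∀ k : ℕ, coeff (k+1) (exp ℚ) * coeff m (d⁄dX ℚ (F ^ (k+1))) =
        coeff k (exp ℚ) * coeff m (F ^ k * d⁄dX ℚ F) := by
      intro k
      rw [Derivation.leibniz_pow, Nat.add_sub_cancel, smul_eq_mul, map_nsmul, nsmul_eq_mul,
        hexp, hexp, Nat.factorial_succ]
      have h1 : ((k:ℚ)+1) ≠ 0 := by positivity
      have h2 : ((k.factorial : ℚ)) ≠ 0 := Nat.cast_ne_zero.2 k.factorial_ne_zero
      push_cast
      field_simp
    rw [Finset.sum_congr rfl (fun k _ => e2 k)]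
    have e3 : ∀ k : ℕ, coeff k (exp ℚ) * coeff m (F ^ k * d⁄dX ℚ F) =
        ∑ i ∈ Finset.range (m+1), coeff (m-i) (d⁄dX ℚ F) *
          (coeff k (exp ℚ) * coeff i (F ^ k)) := by
      intro k
      rw [coeff_mul, Finset.Nat.sum_antidiagonal_eq_sum_range_succ_mk, Finset.mul_sum]
      apply Finset.sum_congr rfl
      intro i _
      ring
    rw [Finset.sum_congr rfl (fun k _ => e3 k), Finset.sum_comm]
    have e4 : ∀ i, i ∈ Finset.range (m+1) →
        ∑ k ∈ Finset.range (m+1), coeff (m-i) (d⁄dX ℚ F) *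
          (coeff k (exp ℚ) * coeff i (F ^ k)) = coeff (m-i) (d⁄dX ℚ F) * b i := by
      intro i hi
      rw [Finset.mem_range] at hi
      rw [← Finset.mul_sum]
      congr 1
      rw [hb]
      symm
      apply Finset.sum_subset
      · intro k hk
        rw [Finset.mem_range] at hk ⊢
        omega
      · intro k hk hk'
        rw [Finset.mem_range] at hk hk'
        rw [coeff_pow_eq_zero' hF0 (by omega), mul_zero]
    rw [Finset.sum_congr rfl e4, ← Finset.sum_range_reflect]
    apply Finset.sum_congr rfl
    intro j hj
    rw [Finset.mem_range] at hj
    have h1 : m + 1 - 1 - j = m - j := by omega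
    have h2 : m - (m - j) = j := by omega
    rw [h1, h2, hdF j, mul_comm]
  -- main coefficient identity
  have main : ∀ m : ℕ, ((genA S m : ℚ)) / m.factorial = b m := by
    intro m
    induction m using Nat.strong_induction_on with
    | _ m ih =>
      match m with
      | 0 =>
        rw [hb, genA_zero]
        simp [hexp]
      | (m+1) =>
        have h1 := hbrec m
        have h2 : ∑ j ∈ Finset.range (m+1), (if (j+1) ∈ S then (1:ℚ) else 0) * b (m - j)
            = ∑ j ∈ Finset.range (m+1), (if (j+1) ∈ S then (1:ℚ) else 0) *
                ((genA S (m-j) : ℚ) / ((m-j).factorial : ℚ)) := by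
          apply Finset.sum_congr rfl
          intro j hj
          rw [Finset.mem_range] at hj
          rw [ih (m-j) (by omega)]
        have h3 : (genA S (m+1) : ℚ) = ∑ j ∈ Finset.range (m+1),
            (if (j+1) ∈ S then ((Nat.descFactorial m j : ℚ) * (genA S (m-j) : ℚ)) else 0) := by
          have h4 := genA_succ S hS m
          rw [Finset.sum_range_succ', if_neg hS, add_zero] at h4
          rw [h4]
          push_cast
          rfl
        have hm1 : ((m:ℚ)+1) ≠ 0 := by positivity
        have hfac : (((m+1).factorial : ℚ)) ≠ 0 := Nat.cast_ne_zero.2 (m+1).factorial_ne_zero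
        have hb1 : b (m+1) = (∑ j ∈ Finset.range (m+1), (if (j+1) ∈ S then (1:ℚ) else 0) *
            ((genA S (m-j) : ℚ) / ((m-j).factorial : ℚ))) / ((m:ℚ)+1) := by
          rw [eq_div_iff hm1, mul_comm]
          exact h1.trans h2
        rw [hb1, div_eq_div_iff hfac hm1, h3, Finset.sum_mul, Finset.sum_mul]
        apply Finset.sum_congr rfl
        intro j hj
        rw [Finset.mem_range] at hj
        have hdesc : ((m-j).factorial : ℚ) * (Nat.descFactorial m j : ℚ) = (m.factorial : ℚ) := by
          exact_mod_cast congrArg (Nat.cast (R := ℚ)) (Nat.factorial_mul_descFactorial (by omega))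
        have hfj : (((m-j).factorial : ℚ)) ≠ 0 := Nat.cast_ne_zero.2 (m-j).factorial_ne_zero
        split_ifs with h
        · rw [Nat.factorial_succ]
          push_cast
          field_simp
          linear_combination (↑(genA S (m - j)) : ℚ) * hdesc
        · simp
  apply PowerSeries.ext
  intro n
  simp only [psSubst, coeff_mk]
  exact main n
end

section
/- For every set S of positive integers, the exponential generating function of the generalized Bell numbers satisfies ∑_{n≥0} B_{n,S} z^n/n! = exp(∑_{s∈S} z^s/s!) as formal power series over ℚ; that is, PowerSeries.mk (fun n => (B_{n,S} : ℚ)/n!) equals the substitution of the power series G := PowerSeries.mk (fun s => if s ∈ S then ((s! : ℚ))⁻¹ else 0) (which has zero constant term since 0 ∉ S) into the exponential power series PowerSeries.exp ℚ. -/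
open PowerSeries Finset

variable {S : Set ℕ} [DecidablePred (· ∈ S)]

noncomputable def Gser (S : Set ℕ) [DecidablePred (· ∈ S)] : PowerSeries ℚ :=
  PowerSeries.mk fun s => if s ∈ S then ((s.factorial : ℚ))⁻¹ else 0

lemma coeff_G_pow_eq_zero (hS : 0 ∉ S) {n k : ℕ} (h : n < k) :
    PowerSeries.coeff (R := ℚ) n ((Gser S) ^ k) = 0 := by
  have hX : (X : PowerSeries ℚ) ∣ Gser S := by
    rw [PowerSeries.X_dvd_iff]
    simp [Gser, PowerSeries.constantCoeff_mk, hS]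
  have : (X : PowerSeries ℚ) ^ k ∣ (Gser S) ^ k := pow_dvd_pow_of_dvd hX k
  exact (PowerSeries.X_pow_dvd_iff.mp this) n h

noncomputable def cE (S : Set ℕ) [DecidablePred (· ∈ S)] (n : ℕ) : ℚ :=
  ∑ k ∈ Finset.range (n + 1), ((k.factorial : ℚ))⁻¹ * PowerSeries.coeff (R := ℚ) n ((Gser S) ^ k)


lemma step_k (hS : 0 ∉ S) (k n : ℕ) :
    ((n + 1 : ℕ) : ℚ) * PowerSeries.coeff (R := ℚ) (n + 1) ((Gser S) ^ (k + 1)) =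
      ((k + 1 : ℕ) : ℚ) * ∑ i ∈ Finset.range (n + 1),
        PowerSeries.coeff (R := ℚ) i ((Gser S) ^ k) *
          (PowerSeries.coeff (R := ℚ) (n + 1 - i) (Gser S) * ((n + 1 - i : ℕ) : ℚ)) := by
  calc ((n + 1 : ℕ) : ℚ) * PowerSeries.coeff (R := ℚ) (n + 1) ((Gser S) ^ (k + 1))
      = PowerSeries.coeff (R := ℚ) n ((PowerSeries.derivative ℚ) ((Gser S) ^ (k + 1))) := by
        rw [PowerSeries.coeff_derivative]; push_cast; ring
    _ = ((k + 1 : ℕ) : ℚ) *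
          PowerSeries.coeff (R := ℚ) n ((Gser S) ^ k * (PowerSeries.derivative ℚ) (Gser S)) := by
        rw [Derivation.leibniz_pow]
        simp only [Nat.add_sub_cancel, smul_eq_mul, map_nsmul]
        simp only [nsmul_eq_mul]
    _ = ((k + 1 : ℕ) : ℚ) * ∑ i ∈ Finset.range (n + 1),
          PowerSeries.coeff (R := ℚ) i ((Gser S) ^ k) *
            (PowerSeries.coeff (R := ℚ) (n + 1 - i) (Gser S) * ((n + 1 - i : ℕ) : ℚ)) := by
        congr 1
        rw [PowerSeries.coeff_mul, Finset.Nat.sum_antidiagonal_eq_sum_range_succ_mk]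
        refine Finset.sum_congr rfl fun i hi => ?_
        have hin : i ≤ n := Nat.lt_succ_iff.mp (Finset.mem_range.mp hi)
        have h2 : n + 1 - i = (n - i) + 1 := by omega
        rw [PowerSeries.coeff_derivative, h2]
        push_cast
        ring

lemma lemA (hS : 0 ∉ S) (n : ℕ) :
    ((n + 1 : ℕ) : ℚ) * cE S (n + 1) =
      ∑ i ∈ Finset.range (n + 1),
        cE S i * (PowerSeries.coeff (R := ℚ) (n + 1 - i) (Gser S) * ((n + 1 - i : ℕ) : ℚ)) := by
  have key : ∀ i ∈ Finset.range (n + 1),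
      (∑ k ∈ Finset.range (n + 1), ((k.factorial : ℚ))⁻¹ *
        PowerSeries.coeff (R := ℚ) i ((Gser S) ^ k)) = cE S i := by
    intro i hi
    rw [Finset.mem_range] at hi
    symm
    apply Finset.sum_subset (Finset.range_subset_range.mpr (by omega))
    intro k hk hki
    rw [Finset.mem_range] at hk hki
    rw [coeff_G_pow_eq_zero hS (by omega), mul_zero]
  calc ((n + 1 : ℕ) : ℚ) * cE S (n + 1)
      = ∑ k ∈ Finset.range (n + 2), ((k.factorial : ℚ))⁻¹ *
          (((n + 1 : ℕ) : ℚ) * PowerSeries.coeff (R := ℚ) (n + 1) ((Gser S) ^ k)) := by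
        rw [cE, Finset.mul_sum]
        exact Finset.sum_congr rfl fun k _ => by ring
    _ = (∑ k ∈ Finset.range (n + 1), (((k + 1).factorial : ℚ))⁻¹ *
          (((n + 1 : ℕ) : ℚ) * PowerSeries.coeff (R := ℚ) (n + 1) ((Gser S) ^ (k + 1)))) +
          ((Nat.factorial 0 : ℚ))⁻¹ *
          (((n + 1 : ℕ) : ℚ) * PowerSeries.coeff (R := ℚ) (n + 1) ((Gser S) ^ 0)) := by
        rw [Finset.sum_range_succ']
    _ = ∑ k ∈ Finset.range (n + 1), ((k.factorial : ℚ))⁻¹ *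
          ∑ i ∈ Finset.range (n + 1), PowerSeries.coeff (R := ℚ) i ((Gser S) ^ k) *
            (PowerSeries.coeff (R := ℚ) (n + 1 - i) (Gser S) * ((n + 1 - i : ℕ) : ℚ)) := by
        rw [pow_zero, PowerSeries.coeff_one, if_neg (by omega), mul_zero, mul_zero, add_zero]
        refine Finset.sum_congr rfl fun k _ => ?_
        rw [step_k hS, Nat.factorial_succ]
        push_cast
        have h1 : (k.factorial : ℚ) ≠ 0 := Nat.cast_ne_zero.mpr k.factorial_ne_zero
        field_simp
    _ = ∑ i ∈ Finset.range (n + 1),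
        cE S i * (PowerSeries.coeff (R := ℚ) (n + 1 - i) (Gser S) * ((n + 1 - i : ℕ) : ℚ)) := by
        simp_rw [Finset.mul_sum]
        rw [Finset.sum_comm]
        refine Finset.sum_congr rfl fun i hi => ?_
        rw [← key i hi, Finset.sum_mul]
        exact Finset.sum_congr rfl fun k _ => by ring


noncomputable def NP (S : Set ℕ) [DecidablePred (· ∈ S)] {α : Type*} [DecidableEq α]
    (u : Finset α) : ℕ :=
  Nat.card {P : Finpartition u // ∀ p ∈ P.parts, p.card ∈ S}

section transfer

variable {α β : Type*} [DecidableEq α] [DecidableEq β] {u : Finset α} {v : Finset β}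
  (f : α → β) (g : β → α)

/-- transfer a finpartition along a bijection between finsets -/
def pmap (hf : ∀ a ∈ u, f a ∈ v) (hg : ∀ b ∈ v, g b ∈ u)
    (hgf : ∀ a ∈ u, g (f a) = a) (hfg : ∀ b ∈ v, f (g b) = b)
    (P : Finpartition u) : Finpartition v where
  parts := P.parts.image fun p => v.filter fun b => g b ∈ p
  supIndep := by
    rw [Finset.supIndep_iff_pairwiseDisjoint]
    rintro q1 h1 q2 h2 hne
    simp only [coe_image, Set.mem_image, mem_coe] at h1 h2
    obtain ⟨p1, hp1, rfl⟩ := h1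
    obtain ⟨p2, hp2, rfl⟩ := h2
    have hps : p1 ≠ p2 := by rintro rfl; exact hne rfl
    have hd := P.disjoint hp1 hp2 hps
    simp only [Function.onFun, Function.id_def] at hd ⊢
    rw [Finset.disjoint_left]
    intro b hb1 hb2
    rw [Finset.mem_filter] at hb1 hb2
    exact (Finset.disjoint_left.mp hd) hb1.2 hb2.2
  sup_parts := by
    apply le_antisymm
    · rw [Finset.sup_le_iff]
      intro q hq
      simp only [mem_image] at hq
      obtain ⟨p, hp, rfl⟩ := hq
      exact Finset.filter_subset _ _
    · intro b hb
      rw [Finset.mem_sup]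
      refine ⟨v.filter fun b' => g b' ∈ P.part (g b), ?_, ?_⟩
      · exact Finset.mem_image_of_mem _ (P.part_mem.2 (hg b hb))
      · simp only [Function.id_def, Finset.mem_filter]
        exact ⟨hb, P.mem_part (hg b hb)⟩
  bot_notMem := by
    simp only [bot_eq_empty, mem_image]
    rintro ⟨p, hp, hemp⟩
    obtain ⟨x, hx⟩ := P.nonempty_of_mem_parts hp
    have hxu : x ∈ u := P.le hp hx
    have : f x ∈ v.filter fun b => g b ∈ p := by
      rw [Finset.mem_filter, hgf x hxu]
      exact ⟨hf x hxu, hx⟩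
    rw [hemp] at this
    exact absurd this (Finset.notMem_empty _)

lemma pmap_card (hf : ∀ a ∈ u, f a ∈ v) (hg : ∀ b ∈ v, g b ∈ u)
    (hgf : ∀ a ∈ u, g (f a) = a) (hfg : ∀ b ∈ v, f (g b) = b)
    (P : Finpartition u) {p : Finset α} (hp : p ∈ P.parts) :
    (v.filter fun b => g b ∈ p).card = p.card := by
  apply Finset.card_bij' (fun b _ => g b) (fun a _ => f a)
  · intro b hb
    exact (Finset.mem_filter.mp hb).2
  · intro a ha
    have hau : a ∈ u := P.le hp ha
    rw [Finset.mem_filter]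
    refine ⟨hf a hau, ?_⟩
    rw [hgf a hau]; exact ha
  · intro b hb
    exact hfg b (Finset.mem_filter.mp hb).1
  · intro a ha
    exact hgf a (P.le hp ha)

lemma pmap_pmap (hf : ∀ a ∈ u, f a ∈ v) (hg : ∀ b ∈ v, g b ∈ u)
    (hgf : ∀ a ∈ u, g (f a) = a) (hfg : ∀ b ∈ v, f (g b) = b)
    (P : Finpartition u) :
    pmap g f hg hf hfg hgf (pmap f g hf hg hgf hfg P) = P := by
  ext q
  simp only [pmap, Finset.mem_image, exists_exists_and_eq_and]
  constructor
  · rintro ⟨p, hp, rfl⟩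
    have : (u.filter fun a => f a ∈ v.filter fun b => g b ∈ p) = p := by
      ext a
      simp only [Finset.mem_filter]
      constructor
      · rintro ⟨hau, _, hgfa⟩
        rwa [hgf a hau] at hgfa
      · intro hap
        have hau : a ∈ u := P.le hp hap
        exact ⟨hau, hf a hau, by rw [hgf a hau]; exact hap⟩
    rw [this]; exact hp
  · intro hq
    refine ⟨q, hq, ?_⟩
    ext a
    simp only [Finset.mem_filter]
    constructor
    · rintro ⟨hau, _, hgfa⟩
      rwa [hgf a hau] at hgfa
    · intro haq
      have hau : a ∈ u := P.le hq haq
      exact ⟨hau, hf a hau, by rw [hgf a hau]; exact haq⟩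

lemma NP_congr (hf : ∀ a ∈ u, f a ∈ v) (hg : ∀ b ∈ v, g b ∈ u)
    (hgf : ∀ a ∈ u, g (f a) = a) (hfg : ∀ b ∈ v, f (g b) = b) :
    NP S u = NP S v := by
  apply Nat.card_congr
  refine ⟨fun P => ⟨pmap f g hf hg hgf hfg P.1, ?_⟩, fun Q => ⟨pmap g f hg hf hfg hgf Q.1, ?_⟩, ?_, ?_⟩
  · intro q hq
    simp only [pmap, Finset.mem_image] at hq
    obtain ⟨p, hp, rfl⟩ := hq
    rw [pmap_card f g hf hg hgf hfg P.1 hp]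
    exact P.2 p hp
  · intro q hq
    simp only [pmap, Finset.mem_image] at hq
    obtain ⟨p, hp, rfl⟩ := hq
    rw [pmap_card g f hg hf hfg hgf Q.1 hp]
    exact Q.2 p hp
  · intro P
    exact Subtype.ext (pmap_pmap f g hf hg hgf hfg P.1)
  · intro Q
    exact Subtype.ext (pmap_pmap g f hg hf hfg hgf Q.1)

end transfer

lemma NP_empty {α : Type*} [DecidableEq α] : NP S (∅ : Finset α) = 1 := by
  rw [NP, Nat.card_eq_one_iff_unique]
  constructor
  · constructor
    intro P Q
    apply Subtype.ext
    exact Subsingleton.elim (α := Finpartition (⊥ : Finset α)) P.1 Q.1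
  · exact ⟨⟨(Finpartition.empty (Finset α)).copy rfl, by
      intro p hp
      simp [Finpartition.empty] at hp⟩⟩

lemma NP_card_eq {α β : Type*} [DecidableEq α] [DecidableEq β] {u : Finset α} {v : Finset β}
    (h : u.card = v.card) : NP S u = NP S v := by
  rcases Finset.eq_empty_or_nonempty u with rfl | hu
  · have hv : v = ∅ := by
      rw [← Finset.card_eq_zero, ← h, Finset.card_empty]
    subst hv
    rw [NP_empty, NP_empty]
  · have hv : v.Nonempty := by
      rw [← Finset.card_pos, ← h, Finset.card_pos]; exact hu
    obtain ⟨a0, ha0⟩ := hu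
    obtain ⟨b0, hb0⟩ := hv
    have e : { x // x ∈ u } ≃ { x // x ∈ v } := Finset.equivOfCardEq h
    set f : α → β := fun a => if h : a ∈ u then (e ⟨a, h⟩ : β) else b0 with hfdef
    set g : β → α := fun b => if h : b ∈ v then (e.symm ⟨b, h⟩ : α) else a0 with hgdef
    apply NP_congr f g
    · intro a ha
      simp only [hfdef, dif_pos ha]
      exact Finset.coe_mem _
    · intro b hb
      simp only [hgdef, dif_pos hb]
      exact Finset.coe_mem _
    · intro a ha
      have h1 : f a ∈ v := by simp only [hfdef, dif_pos ha]; exact Finset.coe_mem _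
      simp only [hgdef, dif_pos h1]
      simp only [hfdef, dif_pos ha]
      simp
    · intro b hb
      have h1 : g b ∈ u := by simp only [hgdef, dif_pos hb]; exact Finset.coe_mem _
      simp only [hfdef, dif_pos h1]
      simp only [hgdef, dif_pos hb]
      simp

lemma avoid_parts_eq {α : Type*} [DecidableEq α] {s : Finset α} (P : Finpartition s)
    {t : Finset α} (ht : t ∈ P.parts) : (P.avoid t).parts = P.parts.erase t := by
  ext q
  rw [Finset.mem_erase, Finpartition.mem_avoid]
  constructor
  · rintro ⟨d, hd, hdt, rfl⟩
    have hne : d ≠ t := by rintro rfl; exact hdt le_rfl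
    have hdisj : Disjoint d t := P.disjoint hd ht hne
    rw [Finset.sdiff_eq_self_of_disjoint hdisj]
    exact ⟨hne, hd⟩
  · rintro ⟨hne, hq⟩
    have hdisj : Disjoint q t := P.disjoint hq ht hne
    refine ⟨q, hq, ?_, Finset.sdiff_eq_self_of_disjoint hdisj⟩
    intro hle
    obtain ⟨x, hx⟩ := P.nonempty_of_mem_parts hq
    exact (Finset.disjoint_left.mp hdisj hx) (hle hx)

variable {n : ℕ}

abbrev PSub (S : Set ℕ) [DecidablePred (· ∈ S)] (n : ℕ) :=
  {P : Finpartition (Finset.univ : Finset (Fin n)) // ∀ p ∈ P.parts, p.card ∈ S}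

noncomputable def fiber_equiv (t : Finset (Fin (n + 1))) (h0 : (0 : Fin (n + 1)) ∈ t) (htS : t.card ∈ S) :
    {P : PSub S (n + 1) // P.1.part 0 = t} ≃
      {Q : Finpartition (Finset.univ \ t) // ∀ p ∈ Q.parts, p.card ∈ S} := by
  have htne : t ≠ ⊥ := by
    rw [Finset.bot_eq_empty]
    exact Finset.ne_empty_of_mem h0
  have hdisj : Disjoint (Finset.univ \ t) t := Finset.sdiff_disjoint
  have hsup : (Finset.univ \ t) ⊔ t = Finset.univ := by
    rw [sup_eq_union]
    exact Finset.sdiff_union_of_subset (Finset.subset_univ t)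
  have htnotmem : ∀ Q : Finpartition (Finset.univ \ t), t ∉ Q.parts := by
    intro Q hQ
    have := Q.le hQ h0
    simp at this
    exact this h0
  refine ⟨fun P => ⟨P.1.1.avoid t, ?_⟩, fun Q => ⟨⟨Q.1.extend htne hdisj hsup, ?_⟩, ?_⟩, ?_, ?_⟩
  · -- condition for avoid
    intro p hp
    have htmem : t ∈ P.1.1.parts := by
      have h := P.1.1.part_mem.2 (Finset.mem_univ (0 : Fin (n + 1)))
      rwa [P.2] at h
    rw [avoid_parts_eq P.1.1 htmem] at hp
    exact P.1.2 p (Finset.mem_of_mem_erase hp)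
  · -- condition for extend
    intro p hp
    rw [Finpartition.extend_parts, Finset.mem_insert] at hp
    rcases hp with rfl | hp
    · exact htS
    · exact Q.2 p hp
  · -- part 0 = t
    apply Finpartition.part_eq_of_mem
    · rw [Finpartition.extend_parts]; exact Finset.mem_insert_self _ _
    · exact h0
  · -- left inverse
    rintro ⟨⟨P, hP⟩, hPt⟩
    have htmem : t ∈ P.parts := by
      have h := P.part_mem.2 (Finset.mem_univ (0 : Fin (n + 1)))
      rwa [hPt] at h
    apply Subtype.ext
    apply Subtype.ext
    apply Finpartition.ext
    rw [Finpartition.extend_parts, avoid_parts_eq P htmem, Finset.insert_erase htmem]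
  · -- right inverse
    rintro ⟨Q, hQ⟩
    apply Subtype.ext
    apply Finpartition.ext
    have htmem : t ∈ (Q.extend htne hdisj hsup).parts := by
      rw [Finpartition.extend_parts]; exact Finset.mem_insert_self _ _
    rw [avoid_parts_eq _ htmem, Finpartition.extend_parts, Finset.erase_insert (htnotmem Q)]

noncomputable def genB' (S : Set ℕ) (n : ℕ) : ℕ :=
  Nat.card {P : Finpartition (Finset.univ : Finset (Fin n)) // ∀ p ∈ P.parts, p.card ∈ S}

lemma count_subsets (n j : ℕ) :
    ((Finset.univ : Finset (Finset (Fin (n + 1)))).filter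
      fun t => (0 : Fin (n + 1)) ∈ t ∧ t.card = j + 1).card = n.choose j := by
  have hcard : ((Finset.univ : Finset (Fin (n + 1))).erase 0).card = n := by
    rw [Finset.card_erase_of_mem (Finset.mem_univ _), Finset.card_univ, Fintype.card_fin]
    omega
  have hpc : (Finset.powersetCard j ((Finset.univ : Finset (Fin (n + 1))).erase 0)).card
      = n.choose j := by rw [Finset.card_powersetCard, hcard]
  rw [← hpc]
  refine Finset.card_bij' (fun t _ => t.erase 0) (fun w _ => insert 0 w) ?_ ?_ ?_ ?_
  · intro t ht
    rw [Finset.mem_filter] at ht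
    rw [Finset.mem_powersetCard]
    exact ⟨Finset.erase_subset_erase _ (Finset.subset_univ t),
      by rw [Finset.card_erase_of_mem ht.2.1, ht.2.2]; omega⟩
  · intro w hw
    rw [Finset.mem_powersetCard] at hw
    have h0w : (0 : Fin (n + 1)) ∉ w := fun h => Finset.notMem_erase _ _ (hw.1 h)
    rw [Finset.mem_filter]
    exact ⟨Finset.mem_univ _, Finset.mem_insert_self _ _,
      by rw [Finset.card_insert_of_notMem h0w, hw.2]⟩
  · intro t ht
    rw [Finset.mem_filter] at ht
    exact Finset.insert_erase ht.2.1
  · intro w hw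
    rw [Finset.mem_powersetCard] at hw
    have h0w : (0 : Fin (n + 1)) ∉ w := fun h => Finset.notMem_erase _ _ (hw.1 h)
    exact Finset.erase_insert h0w

lemma lemB (n : ℕ) :
    genB' S (n + 1) = ∑ j ∈ Finset.range (n + 1),
      if (j + 1) ∈ S then n.choose j * genB' S (n - j) else 0 := by
  classical
  have h1 : genB' S (n + 1) = Fintype.card (PSub S (n + 1)) := by
    rw [genB', Nat.card_eq_fintype_card]
  set A : Finset (Finset (Fin (n + 1))) :=
    Finset.univ.filter (fun t => (0 : Fin (n + 1)) ∈ t ∧ t.card ∈ S) with hA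
  have hmaps : ∀ P : PSub S (n + 1), P ∈ (Finset.univ : Finset (PSub S (n + 1))) →
      P.1.part 0 ∈ A := by
    intro P _
    rw [hA, Finset.mem_filter]
    exact ⟨Finset.mem_univ _, P.1.mem_part (Finset.mem_univ _),
      P.2 _ (P.1.part_mem.2 (Finset.mem_univ _))⟩
  have h2 : Fintype.card (PSub S (n + 1)) =
      ∑ t ∈ A, ((Finset.univ : Finset (PSub S (n + 1))).filter
        fun P => P.1.part 0 = t).card := by
    rw [← Finset.card_univ]
    exact Finset.card_eq_sum_card_fiberwise hmaps
  have h3 : ∀ t ∈ A, ((Finset.univ : Finset (PSub S (n + 1))).filter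
      fun P => P.1.part 0 = t).card = genB' S (n + 1 - t.card) := by
    intro t ht
    rw [hA, Finset.mem_filter] at ht
    obtain ⟨-, h0, htS⟩ := ht
    rw [← Fintype.card_subtype, Fintype.card_congr (fiber_equiv t h0 htS),
      ← Nat.card_eq_fintype_card]
    show NP S _ = _
    rw [genB']
    show _ = NP S (Finset.univ : Finset (Fin (n + 1 - t.card)))
    apply NP_card_eq
    simp [Finset.card_univ_diff]
  rw [h1, h2, Finset.sum_congr rfl h3]
  -- group by cardinality
  have h4 : ∑ t ∈ A, genB' S (n + 1 - t.card) =
      ∑ s ∈ Finset.range (n + 2), ∑ t ∈ A.filter (fun t => t.card = s),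
        genB' S (n + 1 - t.card) := by
    symm
    apply Finset.sum_fiberwise_of_maps_to
    intro t ht
    rw [Finset.mem_range]
    have : t.card ≤ n + 1 := by
      simpa using Finset.card_le_card (Finset.subset_univ t)
    omega
  rw [h4]
  have h5 : ∀ s, ∑ t ∈ A.filter (fun t => t.card = s), genB' S (n + 1 - t.card) =
      (A.filter (fun t => t.card = s)).card * genB' S (n + 1 - s) := by
    intro s
    rw [Finset.sum_congr rfl (fun t ht => by
      rw [(Finset.mem_filter.mp ht).2]), Finset.sum_const, smul_eq_mul]
  rw [Finset.sum_congr rfl fun s _ => h5 s]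
  rw [Finset.sum_range_succ']
  have hzero : (A.filter (fun t => t.card = 0)) = ∅ := by
    rw [Finset.filter_eq_empty_iff]
    intro t ht
    rw [hA, Finset.mem_filter] at ht
    intro hc
    rw [Finset.card_eq_zero] at hc
    rw [hc] at ht
    exact absurd ht.2.1 (Finset.notMem_empty _)
  rw [hzero, Finset.card_empty, zero_mul, add_zero]
  refine Finset.sum_congr rfl fun j hj => ?_
  have hAf : (A.filter (fun t => t.card = j + 1)).card =
      if (j + 1) ∈ S then n.choose j else 0 := by
    by_cases hjS : (j + 1) ∈ S
    · rw [if_pos hjS, ← count_subsets n j]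
      congr 1
      rw [hA, Finset.filter_filter]
      apply Finset.filter_congr
      intro t _
      constructor
      · rintro ⟨⟨h0, -⟩, hc⟩; exact ⟨h0, hc⟩
      · rintro ⟨h0, hc⟩; exact ⟨⟨h0, hc ▸ hjS⟩, hc⟩
    · rw [if_neg hjS, Finset.card_eq_zero, Finset.filter_eq_empty_iff]
      intro t ht hc
      rw [hA, Finset.mem_filter] at ht
      exact hjS (hc ▸ ht.2.2)
  rw [hAf]
  have : n + 1 - (j + 1) = n - j := by omega
  rw [this]
  by_cases hjS : (j + 1) ∈ S
  · rw [if_pos hjS, if_pos hjS]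
  · rw [if_neg hjS, if_neg hjS, zero_mul]


/-- Generalized Bell number `B_{n,S}`: the number of set partitions of `{1,…,n}`
all of whose block sizes lie in `S`. -/
noncomputable def genB (S : Set ℕ) (n : ℕ) : ℕ :=
  Nat.card {P : Finpartition (Finset.univ : Finset (Fin n)) // ∀ p ∈ P.parts, p.card ∈ S}

lemma genB_eq_genB' (m : ℕ) : genB S m = genB' S m := rfl

lemma genB_zero : genB S 0 = 1 := by
  show NP S (Finset.univ : Finset (Fin 0)) = 1
  rw [Finset.univ_eq_empty]
  exact NP_empty

lemma main_eq (hS : 0 ∉ S) : ∀ n : ℕ, (genB S n : ℚ) / n.factorial = cE S n := by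
  intro n
  induction n using Nat.strong_induction_on with
  | _ n ih =>
    match n with
    | 0 =>
        rw [genB_zero, cE]
        simp
    | Nat.succ m =>
        show (genB S (m + 1) : ℚ) / (m + 1).factorial = cE S (m + 1)
        have hA := lemA hS m
        have hswap : ∑ i ∈ Finset.range (m + 1),
            cE S i * (PowerSeries.coeff (R := ℚ) (m + 1 - i) (Gser S) * ((m + 1 - i : ℕ) : ℚ)) =
            ∑ j ∈ Finset.range (m + 1),
              cE S (m - j) * (PowerSeries.coeff (R := ℚ) (j + 1) (Gser S) * ((j + 1 : ℕ) : ℚ)) := by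
          rw [← Finset.sum_range_reflect]
          refine Finset.sum_congr rfl fun j hj => ?_
          rw [Finset.mem_range] at hj
          have h1 : m + 1 - 1 - j = m - j := by omega
          have h2 : m + 1 - (m - j) = j + 1 := by omega
          rw [h1, h2]
        rw [← hA] at hswap
        have hfact : ((m + 1 : ℕ) : ℚ) ≠ 0 := by positivity
        have key : (genB S (m + 1) : ℚ) / m.factorial =
            ∑ j ∈ Finset.range (m + 1),
              cE S (m - j) * (PowerSeries.coeff (R := ℚ) (j + 1) (Gser S) * ((j + 1 : ℕ) : ℚ)) := by
          rw [genB_eq_genB', lemB]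
          push_cast [apply_ite (Nat.cast : ℕ → ℚ)]
          rw [Finset.sum_div]
          refine Finset.sum_congr rfl fun j hj => ?_
          rw [Finset.mem_range] at hj
          have hjm : j ≤ m := by omega
          have hcE : cE S (m - j) = (genB' S (m - j) : ℚ) / (m - j).factorial := by
            rw [← genB_eq_genB', ih (m - j) (by omega)]
          rw [hcE]
          have hcoeff : PowerSeries.coeff (R := ℚ) (j + 1) (Gser S) =
              if (j + 1) ∈ S then (((j + 1).factorial : ℚ))⁻¹ else 0 := by
            rw [Gser, PowerSeries.coeff_mk]
          rw [hcoeff]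
          by_cases hjS : (j + 1) ∈ S
          · rw [if_pos hjS, if_pos hjS]
            rw [Nat.cast_choose ℚ hjm]
            have f1 : (m.factorial : ℚ) ≠ 0 := Nat.cast_ne_zero.mpr m.factorial_ne_zero
            have f2 : (j.factorial : ℚ) ≠ 0 := Nat.cast_ne_zero.mpr j.factorial_ne_zero
            have f3 : ((m - j).factorial : ℚ) ≠ 0 := Nat.cast_ne_zero.mpr (m - j).factorial_ne_zero
            have f4 : (((j + 1).factorial : ℚ)) = ((j + 1 : ℕ) : ℚ) * (j.factorial : ℚ) := by
              rw [Nat.factorial_succ]; push_cast; ring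
            rw [f4]
            have f5 : ((j + 1 : ℕ) : ℚ) ≠ 0 := by positivity
            field_simp
            push_cast
            ring
          · rw [if_neg hjS, if_neg hjS]
            simp
        apply mul_left_cancel₀ hfact
        rw [hswap, ← key]
        have : ((m + 1 : ℕ) : ℚ) * ((genB S (m + 1) : ℚ) / (m + 1).factorial) =
            (genB S (m + 1) : ℚ) / m.factorial := by
          rw [Nat.factorial_succ]
          push_cast
          field_simp
        rw [this]

theorem statement3 (S : Set ℕ) [DecidablePred (· ∈ S)] (hS : 0 ∉ S) :
    PowerSeries.mk (fun n => (genB S n : ℚ) / n.factorial) =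
      psSubst (PowerSeries.mk fun s => if s ∈ S then ((s.factorial : ℚ))⁻¹ else 0)
        (PowerSeries.exp ℚ) := by
  apply PowerSeries.ext
  intro n
  rw [PowerSeries.coeff_mk]
  have hRHS : PowerSeries.coeff (R := ℚ) n
      (psSubst (PowerSeries.mk fun s => if s ∈ S then ((s.factorial : ℚ))⁻¹ else 0)
        (PowerSeries.exp ℚ)) = cE S n := by
    rw [psSubst, PowerSeries.coeff_mk, cE]
    refine Finset.sum_congr rfl fun k _ => ?_
    have hG : (PowerSeries.mk fun s => if s ∈ S then ((s.factorial : ℚ))⁻¹ else 0) = Gser S :=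
      rfl
    rw [hG, PowerSeries.coeff_exp, Algebra.algebraMap_self, RingHom.id_apply, one_div]
  rw [hRHS]
  exact main_eq hS n
end

section
/- For all n ∈ ℕ and every set S of positive integers, A_{n,S} ≥ B_{n,S}: the number of permutations of {1,…,n} all of whose cycle lengths lie in S is at least the number of set partitions of {1,…,n} all of whose block sizes lie in S. -/
open Finset Function Equiv

/-- The size of a same-cycle class is the minimal period. -/
lemma cardSameCycle {n : ℕ} (σ : Equiv.Perm (Fin n)) (a : Fin n) (p : Finset (Fin n))
    (hp : ∀ b, b ∈ p ↔ σ.SameCycle a b) :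
    p.card = Function.minimalPeriod σ a := by
  classical
  have horb : {b | σ.SameCycle a b} = MulAction.orbit (Subgroup.zpowers σ) a := by
    ext b
    simp only [Set.mem_setOf_eq, MulAction.mem_orbit_iff, Subgroup.exists_zpowers]
    constructor
    · rintro ⟨i, hi⟩; exact ⟨i, hi⟩
    · rintro ⟨i, hi⟩; exact ⟨i, hi⟩
  have hmp : Function.minimalPeriod (σ • ·) a = Function.minimalPeriod σ a := rfl
  have := MulAction.minimalPeriod_eq_card (a := σ) (b := a)
  rw [hmp] at this
  rw [this, ← Set.toFinset_card]
  congr 1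
  ext b
  simp [← horb, hp b, Equiv.Perm.SameCycle]

/-- The same-cycle setoid of a permutation. -/
def scSetoid {n : ℕ} (σ : Equiv.Perm (Fin n)) : Setoid (Fin n) :=
  ⟨σ.SameCycle, ⟨fun _ => Equiv.Perm.SameCycle.refl σ _, fun h => h.symm, fun h h' => h.trans h'⟩⟩

open scoped Classical in
/-- The orbit partition of a permutation. -/
noncomputable def toPart {n : ℕ} (σ : Equiv.Perm (Fin n)) :
    Finpartition (Finset.univ : Finset (Fin n)) :=
  Finpartition.ofSetoid (scSetoid σ)

/-- Cycling within a fixed finset `p`, using a family of rotations. -/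
noncomputable def cycleOnAux {n : ℕ} (r : ∀ m, Equiv.Perm (Fin m)) (p : Finset (Fin n))
    (x : Fin n) : Fin n :=
  if h : x ∈ p then (p.equivFin.symm (r p.card (p.equivFin ⟨x, h⟩)) : Fin n) else x

lemma cycleOnAux_mem {n : ℕ} {r : ∀ m, Equiv.Perm (Fin m)} {p : Finset (Fin n)} {x : Fin n}
    (h : x ∈ p) : cycleOnAux r p x ∈ p := by
  simp only [cycleOnAux, dif_pos h]
  exact Finset.coe_mem _

lemma cycleOnAux_coe {n : ℕ} (r : ∀ m, Equiv.Perm (Fin m)) (p : Finset (Fin n))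
    (j : Fin p.card) : cycleOnAux r p (p.equivFin.symm j : Fin n)
      = (p.equivFin.symm (r p.card j) : Fin n) := by
  rw [cycleOnAux, dif_pos (Finset.coe_mem _)]
  congr 2
  have : (⟨(p.equivFin.symm j : Fin n), Finset.coe_mem _⟩ : {x // x ∈ p}) = p.equivFin.symm j :=
    Subtype.ext rfl
  rw [this, Equiv.apply_symm_apply]

lemma cycleOnAux_inv {n : ℕ} (r : ∀ m, Equiv.Perm (Fin m)) (p : Finset (Fin n))
    {x : Fin n} (h : x ∈ p) :
    cycleOnAux (fun m => (r m)⁻¹) p (cycleOnAux r p x) = x := by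
  have hx : x = (p.equivFin.symm (p.equivFin ⟨x, h⟩) : Fin n) := by
    rw [Equiv.symm_apply_apply]
  rw [hx, cycleOnAux_coe, cycleOnAux_coe]
  simp

/-- The permutation associated to a partition: rotate each block. -/
noncomputable def toPerm {n : ℕ} (P : Finpartition (Finset.univ : Finset (Fin n))) :
    Equiv.Perm (Fin n) where
  toFun x := cycleOnAux finRotate (P.part x) x
  invFun x := cycleOnAux (fun m => (finRotate m)⁻¹) (P.part x) x
  left_inv x := by
    have hx : x ∈ P.part x := P.mem_part (Finset.mem_univ x)
    have h1 : cycleOnAux finRotate (P.part x) x ∈ P.part x := cycleOnAux_mem hx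
    have h2 : P.part (cycleOnAux finRotate (P.part x) x) = P.part x :=
      P.part_eq_of_mem (P.part_mem.2 (Finset.mem_univ x)) h1
    beta_reduce
    rw [h2, cycleOnAux_inv _ _ hx]
  right_inv x := by
    have hx : x ∈ P.part x := P.mem_part (Finset.mem_univ x)
    have h1 : cycleOnAux (fun m => (finRotate m)⁻¹) (P.part x) x ∈ P.part x := cycleOnAux_mem hx
    have h2 : P.part (cycleOnAux (fun m => (finRotate m)⁻¹) (P.part x) x) = P.part x :=
      P.part_eq_of_mem (P.part_mem.2 (Finset.mem_univ x)) h1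
    beta_reduce
    rw [h2]
    have := cycleOnAux_inv (fun m => (finRotate m)⁻¹) (P.part x) (x := x) hx
    simpa using this

lemma toPerm_coe {n : ℕ} (P : Finpartition (Finset.univ : Finset (Fin n)))
    {p : Finset (Fin n)} (hp : p ∈ P.parts) (j : Fin p.card) :
    toPerm P (p.equivFin.symm j : Fin n) = (p.equivFin.symm (finRotate p.card j) : Fin n) := by
  have hmem : (p.equivFin.symm j : Fin n) ∈ p := Finset.coe_mem _
  have hpart : P.part (p.equivFin.symm j : Fin n) = p := P.part_eq_of_mem hp hmem
  show cycleOnAux finRotate (P.part _) _ = _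
  rw [hpart, cycleOnAux_coe]

lemma toPerm_pow_coe {n : ℕ} (P : Finpartition (Finset.univ : Finset (Fin n)))
    {p : Finset (Fin n)} (hp : p ∈ P.parts) (k : ℕ) (j : Fin p.card) :
    ((toPerm P) ^ k) (p.equivFin.symm j : Fin n)
      = (p.equivFin.symm ((finRotate p.card ^ k) j) : Fin n) := by
  induction k with
  | zero => simp
  | succ k ih =>
    rw [pow_succ', pow_succ', Equiv.Perm.mul_apply, Equiv.Perm.mul_apply, ih, toPerm_coe P hp]

open Fin.CommRing Fin.NatCast in
lemma finRotate_pow_apply (m k : ℕ) (i : Fin (m + 1)) :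
    (finRotate (m + 1) ^ k) i = i + (k : Fin (m + 1)) := by
  induction k with
  | zero => simp
  | succ k ih =>
    rw [pow_succ', Equiv.Perm.mul_apply, ih, finRotate_succ_apply]
    push_cast
    ring

open Fin.CommRing Fin.NatCast in
lemma finRotate_pow_sub {m : ℕ} (hm : 0 < m) (i j : Fin m) :
    (finRotate m ^ (j - i : Fin m).val) i = j := by
  obtain ⟨m, rfl⟩ := Nat.exists_eq_succ_of_ne_zero hm.ne'
  rw [finRotate_pow_apply, Fin.cast_val_eq_self]
  ring

lemma sameCycle_toPerm_iff {n : ℕ} (P : Finpartition (Finset.univ : Finset (Fin n)))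
    (x b : Fin n) : (toPerm P).SameCycle x b ↔ b ∈ P.part x := by
  have hx : x ∈ P.part x := P.mem_part (Finset.mem_univ x)
  have hp : P.part x ∈ P.parts := P.part_mem.2 (Finset.mem_univ x)
  set p := P.part x with hpdef
  have hx' : x = (p.equivFin.symm (p.equivFin ⟨x, hx⟩) : Fin n) := by
    rw [Equiv.symm_apply_apply]
  constructor
  · intro h
    obtain ⟨k, -, hk⟩ := h.exists_pow_eq'
    rw [← hk, hx', toPerm_pow_coe P hp]
    exact Finset.coe_mem _
  · intro hb
    have hcard : 0 < p.card := Finset.card_pos.mpr ⟨x, hx⟩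
    set i := p.equivFin ⟨x, hx⟩
    set jb := p.equivFin ⟨b, hb⟩
    refine ⟨(((jb - i : Fin p.card)).val : ℤ), ?_⟩
    rw [zpow_natCast, hx', toPerm_pow_coe P hp, finRotate_pow_sub hcard]
    show ((p.equivFin.symm (p.equivFin ⟨b, hb⟩)) : Fin n) = b
    rw [Equiv.symm_apply_apply]

lemma toPart_toPerm {n : ℕ} (P : Finpartition (Finset.univ : Finset (Fin n))) :
    toPart (toPerm P) = P := by
  classical
  ext q
  show q ∈ (Finpartition.ofSetoid (scSetoid (toPerm P))).parts ↔ q ∈ P.parts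
  rw [Finpartition.ofSetoid]
  simp only [Finpartition.ofSetSetoid_parts, Finset.mem_image, Finset.mem_univ, true_and]
  constructor
  · rintro ⟨a, rfl⟩
    have : ({b | (scSetoid (toPerm P)).r a b} : Finset (Fin n)) = P.part a := by
      ext b
      simp only [Finset.mem_filter, Finset.mem_univ, true_and, Set.mem_setOf_eq]
      exact sameCycle_toPerm_iff P a b
    rw [this]
    exact P.part_mem.2 (Finset.mem_univ a)
  · intro hq
    obtain ⟨a, ha⟩ := P.nonempty_of_mem_parts hq
    refine ⟨a, ?_⟩
    have hpa : P.part a = q := P.part_eq_of_mem hq ha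
    ext b
    simp only [Finset.mem_filter, Finset.mem_univ, true_and, Set.mem_setOf_eq]
    rw [← hpa]
    exact sameCycle_toPerm_iff P a b

lemma toPart_parts_card {n : ℕ} (σ : Equiv.Perm (Fin n)) {q : Finset (Fin n)}
    (hq : q ∈ (toPart σ).parts) : ∃ a, q.card = Function.minimalPeriod σ a := by
  classical
  rw [toPart, Finpartition.ofSetoid] at hq
  simp only [Finpartition.ofSetSetoid_parts, Finset.mem_image, Finset.mem_univ, true_and] at hq
  obtain ⟨a, rfl⟩ := hq
  refine ⟨a, cardSameCycle σ a _ fun b => ?_⟩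
  simp [scSetoid]; exact Iff.rfl

theorem statement9 (S : Set ℕ) (hS : 0 ∉ S) (n : ℕ) :
    genB S n ≤ genA S n := by
  classical
  rw [genA, genB]
  refine Nat.card_le_card_of_surjective
    (fun σ : {σ : Equiv.Perm (Fin n) // ∀ x, Function.minimalPeriod σ x ∈ S} =>
      (⟨toPart σ.1, fun q hq => by
        obtain ⟨a, ha⟩ := toPart_parts_card σ.1 hq
        rw [ha]; exact σ.2 a⟩ :
        {P : Finpartition (Finset.univ : Finset (Fin n)) // ∀ p ∈ P.parts, p.card ∈ S})) ?_
  rintro ⟨P, hP⟩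
  refine ⟨⟨toPerm P, fun x => ?_⟩, ?_⟩
  · have := cardSameCycle (toPerm P) x (P.part x) fun b =>
      (sameCycle_toPerm_iff P x b).symm
    rw [← this]
    exact hP _ (P.part_mem.2 (Finset.mem_univ x))
  · exact Subtype.ext (toPart_toPerm P)
end

section
/- For all n ∈ ℕ and every set S of positive integers, A_{n+1,S} = ∑_{s ∈ S, 1 ≤ s ≤ n+1} (n!/(n−s+1)!) · A_{n+1−s,S}, where n!/(n−s+1)! is the falling factorial n·(n−1)⋯(n−s+2) (in Lean: the sum over s in Finset.range (n+2) with s ∈ S of Nat.descFactorial n (s−1) · A_{n+1−s,S}). -/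
open Equiv Function
open Fin.NatCast

section Aux

/-- minimal period is invariant under injective semiconjugation. -/
lemma minimalPeriod_semiconj {α β : Type*} {fa : α → α} {fb : β → β} {e : α → β}
    (he : Function.Injective e) (h : Function.Semiconj e fa fb) (x : α) :
    Function.minimalPeriod fb (e x) = Function.minimalPeriod fa x := by
  have key : ∀ k, Function.IsPeriodicPt fb k (e x) ↔ Function.IsPeriodicPt fa k x := by
    intro k
    unfold Function.IsPeriodicPt Function.IsFixedPt
    rw [← h.iterate_right k x, he.eq_iff]
  refine Nat.dvd_antisymm ?_ ?_
  · exact ((key _).2 (Function.isPeriodicPt_minimalPeriod _ _)).minimalPeriod_dvd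
  · exact ((key _).1 (Function.isPeriodicPt_minimalPeriod _ _)).minimalPeriod_dvd

lemma genA_card {α : Type*} [Fintype α] (S : Set ℕ) :
    Nat.card {σ : Equiv.Perm α // ∀ x, Function.minimalPeriod σ x ∈ S}
      = genA S (Fintype.card α) := by
  classical
  set e := Fintype.equivFin α with he
  rw [genA]
  apply Nat.card_congr
  refine (e.permCongr).subtypeEquiv fun σ => ?_
  have key : ∀ y, Function.minimalPeriod (e.permCongr σ) y
      = Function.minimalPeriod σ (e.symm y) := by
    intro y
    have hsc : Function.Semiconj e σ (e.permCongr σ) := fun a => by simp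
    have := minimalPeriod_semiconj e.injective hsc (e.symm y)
    simpa using this
  constructor
  · intro h y; rw [key]; exact h _
  · intro h x
    have := h (e x)
    rwa [key, e.symm_apply_apply] at this

lemma finRotate_iterate {t : ℕ} (k : ℕ) (i : Fin (t + 1)) :
    (finRotate (t + 1))^[k] i = i + (k : Fin (t + 1)) := by
  induction k with
  | zero => simp
  | succ k ih =>
      rw [Function.iterate_succ_apply', ih, finRotate_succ_apply]
      push_cast
      exact add_assoc _ _ _

lemma minimalPeriod_finRotate {t : ℕ} (i : Fin (t + 1)) :
    Function.minimalPeriod (finRotate (t + 1)) i = t + 1 := by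
  have hper : ∀ k, Function.IsPeriodicPt (finRotate (t + 1)) k i ↔ (t + 1) ∣ k := by
    intro k
    unfold Function.IsPeriodicPt Function.IsFixedPt
    rw [finRotate_iterate, add_eq_left, Fin.natCast_eq_zero]
  refine Nat.dvd_antisymm ?_ ?_
  · exact ((hper (t + 1)).2 dvd_rfl).minimalPeriod_dvd
  · exact (hper _).1 (Function.isPeriodicPt_minimalPeriod _ _)

/-- the permutation of `Fin α` has minimal period at most the cardinality. -/
lemma minimalPeriod_le_card {α : Type*} [Fintype α] (f : α → α) (x : α) :
    Function.minimalPeriod f x ≤ Fintype.card α := by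
  have hinj : Function.Injective (fun k : Fin (Function.minimalPeriod f x) => f^[k.val] x) := by
    intro a b hab
    exact Fin.ext (Function.iterate_injOn_Iio_minimalPeriod a.isLt b.isLt hab)
  simpa using Fintype.card_le_of_injective _ hinj

end Aux

section Construction

variable {n t : ℕ}

/-- The injection `Fin (t+1) → Fin (n+1)` determined by an embedding `f : Fin t ↪ Fin n`,
sending `0 ↦ 0` and `i+1 ↦ (f i)+1`. -/
def gfun (f : Fin t ↪ Fin n) : Fin (t + 1) → Fin (n + 1) :=
  Fin.cases 0 (fun i => (f i).succ)

@[simp] lemma gfun_zero (f : Fin t ↪ Fin n) : gfun f 0 = 0 := rfl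

@[simp] lemma gfun_succ (f : Fin t ↪ Fin n) (i : Fin t) : gfun f i.succ = (f i).succ := rfl

lemma gfun_injective (f : Fin t ↪ Fin n) : Function.Injective (gfun f) := by
  intro a b h
  induction a using Fin.cases with
  | zero =>
      induction b using Fin.cases with
      | zero => rfl
      | succ j => simp only [gfun_zero, gfun_succ] at h; exact absurd h.symm (Fin.succ_ne_zero _)
  | succ i =>
      induction b using Fin.cases with
      | zero => simp only [gfun_zero, gfun_succ] at h; exact absurd h (Fin.succ_ne_zero _)
      | succ j =>
          simp only [gfun_succ] at h
          exact congrArg Fin.succ (f.injective (Fin.succ_injective _ h))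

/-- The predicate "x is in the range of `gfun f`". -/
def pA (f : Fin t ↪ Fin n) (x : Fin (n + 1)) : Prop := ∃ i, gfun f i = x

instance (f : Fin t ↪ Fin n) : DecidablePred (pA f) := fun _ => Fintype.decidableExistsFintype

/-- `Fin (t+1)` is equivalent to the subtype cut out by `pA f`. -/
noncomputable def eA (f : Fin t ↪ Fin n) : Fin (t + 1) ≃ {x : Fin (n + 1) // pA f x} :=
  Equiv.ofBijective (fun i => ⟨gfun f i, ⟨i, rfl⟩⟩)
    ⟨fun a b hab => gfun_injective f (Subtype.ext_iff.1 hab),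
     fun x => ⟨x.2.choose, Subtype.ext x.2.choose_spec⟩⟩

@[simp] lemma eA_apply (f : Fin t ↪ Fin n) (i : Fin (t + 1)) :
    (eA f i : Fin (n + 1)) = gfun f i := rfl

/-- The permutation built from an embedding (giving the cycle through 0) and a
permutation of the complement. -/
noncomputable def Phi (f : Fin t ↪ Fin n) (τ : Equiv.Perm {x : Fin (n + 1) // ¬ pA f x}) :
    Equiv.Perm (Fin (n + 1)) :=
  (Equiv.sumCompl (pA f)).permCongr
    (Equiv.sumCongr ((eA f).permCongr (finRotate (t + 1))) τ)

lemma Phi_apply_pos (f : Fin t ↪ Fin n) (τ : Equiv.Perm {x : Fin (n + 1) // ¬ pA f x})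
    (j : Fin (t + 1)) : Phi f τ (gfun f j) = gfun f (j + 1) := by
  have hx : pA f (gfun f j) := ⟨j, rfl⟩
  have h1 : (Equiv.sumCompl (pA f)).symm (gfun f j) = Sum.inl ⟨gfun f j, hx⟩ :=
    Equiv.sumCompl_symm_apply_of_pos hx
  have h2 : (eA f).symm ⟨gfun f j, hx⟩ = j := by
    apply (eA f).injective; simp [Equiv.apply_symm_apply]; exact Subtype.ext rfl
  simp only [Phi, Equiv.permCongr_apply, h1, Equiv.sumCongr_apply, Sum.map_inl,
    Equiv.sumCompl_apply_inl, h2]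
  simp [finRotate_succ_apply]

lemma Phi_apply_neg (f : Fin t ↪ Fin n) (τ : Equiv.Perm {x : Fin (n + 1) // ¬ pA f x})
    (x : Fin (n + 1)) (hx : ¬ pA f x) : Phi f τ x = (τ ⟨x, hx⟩ : Fin (n + 1)) := by
  have h1 : (Equiv.sumCompl (pA f)).symm x = Sum.inr ⟨x, hx⟩ :=
    Equiv.sumCompl_symm_apply_of_neg hx
  simp only [Phi, Equiv.permCongr_apply, h1, Equiv.sumCongr_apply, Sum.map_inr,
    Equiv.sumCompl_apply_inr]

lemma per_Phi_pos (f : Fin t ↪ Fin n) (τ : Equiv.Perm {x : Fin (n + 1) // ¬ pA f x})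
    (j : Fin (t + 1)) : Function.minimalPeriod (Phi f τ) (gfun f j) = t + 1 := by
  have hsc : Function.Semiconj (gfun f) (finRotate (t + 1)) (Phi f τ) := by
    intro i
    rw [Phi_apply_pos, finRotate_succ_apply]
  rw [minimalPeriod_semiconj (gfun_injective f) hsc j, minimalPeriod_finRotate]

lemma per_Phi_neg (f : Fin t ↪ Fin n) (τ : Equiv.Perm {x : Fin (n + 1) // ¬ pA f x})
    (y : {x : Fin (n + 1) // ¬ pA f x}) :
    Function.minimalPeriod (Phi f τ) (y : Fin (n + 1)) = Function.minimalPeriod τ y := by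
  have hsc : Function.Semiconj (Subtype.val : {x : Fin (n + 1) // ¬ pA f x} → Fin (n + 1))
      τ (Phi f τ) := by
    intro z
    rw [Phi_apply_neg f τ z.1 z.2]
  exact minimalPeriod_semiconj Subtype.val_injective hsc y

end Construction

section Fiber

variable {n t : ℕ}

lemma fiber_card_s10 (S : Set ℕ) (hS : t + 1 ∈ S) (ht : t ≤ n) :
    Nat.card {σ : Equiv.Perm (Fin (n + 1)) //
        (∀ x, Function.minimalPeriod σ x ∈ S) ∧ Function.minimalPeriod σ 0 = t + 1}
      = Nat.descFactorial n t * genA S (n - t) := by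
  classical
  set D := (Σ f : Fin t ↪ Fin n,
    {τ : Equiv.Perm {x : Fin (n + 1) // ¬ pA f x} // ∀ y, Function.minimalPeriod τ y ∈ S}) with hD
  have hbij : ∃ Ψ : D → {σ : Equiv.Perm (Fin (n + 1)) //
      (∀ x, Function.minimalPeriod σ x ∈ S) ∧ Function.minimalPeriod σ 0 = t + 1},
      Function.Bijective Ψ := by
    refine ⟨fun d => ⟨Phi d.1 d.2.1, ?_, ?_⟩, ?_, ?_⟩
    · -- all periods in S
      intro x
      by_cases hx : pA d.1 x
      · obtain ⟨j, rfl⟩ := hx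
        rw [per_Phi_pos]; exact hS
      · have := per_Phi_neg d.1 d.2.1 ⟨x, hx⟩
        rw [this]; exact d.2.2 _
    · -- period at 0 is t+1
      have := per_Phi_pos d.1 d.2.1 0
      simpa using this
    · -- injective
      rintro ⟨f, τ, hτ⟩ ⟨f', τ', hτ'⟩ h
      have hσ : Phi f τ = Phi f' τ' := congrArg Subtype.val h
      -- iterates of 0 recover gfun
      have iter : ∀ (g : Fin t ↪ Fin n) (π : Equiv.Perm {x : Fin (n + 1) // ¬ pA g x}) (k : ℕ),
          (Phi g π)^[k] 0 = gfun g (k : Fin (t + 1)) := by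
        intro g π k
        induction k with
        | zero => simp
        | succ k ih =>
            rw [Function.iterate_succ_apply', ih, Phi_apply_pos]
            push_cast
            ring_nf
      have hg : ∀ j : Fin (t + 1), gfun f j = gfun f' j := by
        intro j
        have h1 := iter f τ j.val
        have h2 := iter f' τ' j.val
        rw [hσ] at h1
        rw [h1] at h2
        simpa [Fin.cast_val_eq_self] using h2
      have hf : f = f' := by
        ext i
        have := hg i.succ
        simp only [gfun_succ] at this
        exact congrArg Fin.val (Fin.succ_injective _ this)
      subst hf
      have hτeq : τ = τ' := by
        apply Equiv.ext
        intro y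
        apply Subtype.ext
        have h1 := Phi_apply_neg f τ y.1 y.2
        have h2 := Phi_apply_neg f τ' y.1 y.2
        rw [hσ] at h1
        rw [h1] at h2
        exact h2
      subst hτeq
      rfl
    · -- surjective
      rintro ⟨σ, hP, h0⟩
      -- basic facts about the orbit of 0
      have hper : ∀ k, Function.IsPeriodicPt σ k 0 ↔ (t + 1) ∣ k := by
        intro k
        rw [Function.isPeriodicPt_iff_minimalPeriod_dvd, h0]
      have hne : ∀ i : Fin t, σ^[i.val + 1] 0 ≠ 0 := by
        intro i h
        have : (t + 1) ∣ (i.val + 1) := (hper _).1 h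
        have := Nat.le_of_dvd (Nat.succ_pos _) this
        omega
      set f0 : Fin t → Fin n := fun i => (σ^[i.val + 1] 0).pred (hne i) with hf0
      have hinj : Function.Injective f0 := by
        intro a b hab
        have h1 : σ^[a.val + 1] 0 = σ^[b.val + 1] 0 := by
          have := congrArg Fin.succ hab
          simpa [hf0, Fin.succ_pred] using this
        have := Function.iterate_injOn_Iio_minimalPeriod (f := ⇑σ) (x := (0 : Fin (n + 1)))
          (by rw [h0]; exact Set.mem_Iio.2 (by omega)) (by rw [h0]; exact Set.mem_Iio.2 (by omega)) h1
        exact Fin.ext (by omega)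
      set f : Fin t ↪ Fin n := ⟨f0, hinj⟩ with hf
      have hgf : ∀ j : Fin (t + 1), gfun f j = σ^[j.val] 0 := by
        intro j
        induction j using Fin.cases with
        | zero => simp
        | succ i => simp [hf, hf0, Fin.succ_pred]
      have hpA : ∀ x, pA f x ↔ ∃ k : ℕ, σ^[k] 0 = x := by
        intro x
        constructor
        · rintro ⟨j, rfl⟩; exact ⟨j.val, (hgf j).symm⟩
        · rintro ⟨k, rfl⟩
          refine ⟨⟨k % (t + 1), Nat.mod_lt _ (Nat.succ_pos _)⟩, ?_⟩
          have := hgf ⟨k % (t + 1), Nat.mod_lt _ (Nat.succ_pos _)⟩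
          rw [this]
          have : σ^[k % Function.minimalPeriod σ 0] 0 = σ^[k] 0 :=
            Function.iterate_mod_minimalPeriod_eq
          rwa [h0] at this
      have hinv : ∀ x, ¬ pA f x ↔ ¬ pA f (σ x) := by
        intro x
        apply not_congr
        rw [hpA, hpA]
        constructor
        · rintro ⟨k, rfl⟩
          exact ⟨k + 1, by rw [Function.iterate_succ_apply']⟩
        · rintro ⟨k, hk⟩
          refine ⟨k + t, ?_⟩
          apply σ.injective
          rw [← Function.iterate_succ_apply' σ (k + t) 0]
          have : σ^[k + t + 1] 0 = σ^[k] 0 := by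
            have : Function.IsPeriodicPt σ (t + 1) (σ^[k] 0) :=
              ((hper (t + 1)).2 dvd_rfl).apply_iterate k
            calc σ^[k + t + 1] 0 = σ^[t + 1] (σ^[k] 0) := by
                  rw [← Function.iterate_add_apply]; ring_nf
              _ = σ^[k] 0 := this
          rw [this, hk]
      set τ : Equiv.Perm {x : Fin (n + 1) // ¬ pA f x} := σ.subtypePerm (fun x => (hinv x).symm) with hτdef
      have hτS : ∀ y, Function.minimalPeriod τ y ∈ S := by
        intro y
        have hsc : Function.Semiconj (Subtype.val : {x : Fin (n + 1) // ¬ pA f x} → Fin (n + 1))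
            τ σ := fun z => rfl
        have := minimalPeriod_semiconj Subtype.val_injective hsc y
        rw [← this]
        exact hP _
      refine ⟨⟨f, τ, hτS⟩, ?_⟩
      apply Subtype.ext
      show Phi f τ = σ
      apply Equiv.ext
      intro x
      by_cases hx : pA f x
      · obtain ⟨j, rfl⟩ := hx
        rw [Phi_apply_pos, hgf, hgf, ← Function.iterate_succ_apply' σ j.val 0]
        have hval : (j + 1).val = (j.val + 1) % (t + 1) := by
          rcases Nat.lt_or_ge (j.val + 1) (t + 1) with h | h
          · rw [Fin.val_add_one_of_lt (by simp only [Fin.lt_def, Fin.val_last]; omega), Nat.mod_eq_of_lt h]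
          · have hj : j.val = t := by omega
            have hlast : j = Fin.last t := Fin.ext hj
            rw [hlast, Fin.last_add_one]
            simp [hj, Nat.mod_self]
        rw [hval]
        have : σ^[(j.val + 1) % Function.minimalPeriod σ 0] 0 = σ^[j.val + 1] 0 :=
          Function.iterate_mod_minimalPeriod_eq
        rwa [h0] at this
      · rw [Phi_apply_neg f τ x hx]
        rfl
  obtain ⟨Ψ, hΨ⟩ := hbij
  rw [← Nat.card_eq_of_bijective Ψ hΨ]
  -- now compute the cardinality of the sigma type
  rw [hD, Nat.card_eq_fintype_card, Fintype.card_sigma]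
  have hterm : ∀ f : Fin t ↪ Fin n,
      Fintype.card {τ : Equiv.Perm {x : Fin (n + 1) // ¬ pA f x} //
        ∀ y, Function.minimalPeriod τ y ∈ S} = genA S (n - t) := by
    intro f
    rw [← Nat.card_eq_fintype_card, genA_card]
    congr 1
    rw [Fintype.card_subtype_compl]
    have h1 : Fintype.card {x : Fin (n + 1) // pA f x} = t + 1 := by
      rw [← Fintype.card_congr (eA f), Fintype.card_fin]
    rw [h1, Fintype.card_fin]
    omega
  simp only [hterm, Finset.sum_const, Finset.card_univ, smul_eq_mul]
  rw [Fintype.card_embedding_eq, Fintype.card_fin, Fintype.card_fin]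

end Fiber

theorem statement10 (S : Set ℕ) [DecidablePred (· ∈ S)] (hS : 0 ∉ S) (n : ℕ) :
    genA S (n + 1) =
      ∑ s ∈ (Finset.range (n + 2)).filter (· ∈ S),
        Nat.descFactorial n (s - 1) * genA S (n + 1 - s) := by
  classical
  rw [genA, Nat.card_eq_fintype_card, Fintype.card_subtype]
  rw [Finset.card_eq_sum_card_fiberwise
    (f := fun σ : Equiv.Perm (Fin (n + 1)) => Function.minimalPeriod σ 0)
    (t := (Finset.range (n + 2)).filter (· ∈ S))
    (fun σ hσ => by
      simp only [Finset.mem_coe, Finset.mem_filter, Finset.mem_univ, true_and] at hσ ⊢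
      refine ⟨Finset.mem_range.2 ?_, hσ 0⟩
      have := minimalPeriod_le_card (⇑σ) (0 : Fin (n + 1))
      simp only [Fintype.card_fin] at this
      omega)]
  apply Finset.sum_congr rfl
  intro s hs
  simp only [Finset.mem_filter, Finset.mem_range] at hs
  obtain ⟨hs2, hsS⟩ := hs
  have hs0 : s ≠ 0 := fun h => hS (h ▸ hsS)
  obtain ⟨t, rfl⟩ : ∃ t, s = t + 1 := ⟨s - 1, by omega⟩
  have ht : t ≤ n := by omega
  rw [Finset.filter_filter]
  have : ((Finset.univ : Finset (Equiv.Perm (Fin (n + 1)))).filter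
      fun σ : Equiv.Perm (Fin (n + 1)) => (∀ x, Function.minimalPeriod σ x ∈ S) ∧ Function.minimalPeriod σ 0 = t + 1).card
      = Nat.card {σ : Equiv.Perm (Fin (n + 1)) //
        (∀ x, Function.minimalPeriod σ x ∈ S) ∧ Function.minimalPeriod σ 0 = t + 1} := by
    rw [Nat.card_eq_fintype_card, Fintype.card_subtype]
  rw [this, fiber_card_s10 S hsS ht]
  have e2 : n + 1 - (t + 1) = n - t := by omega
  rw [Nat.add_sub_cancel, e2]
end

section
/- For all n, k ∈ ℕ and every set S of positive integers, [n+1, k+1]_S = ∑_{s ∈ S, 1 ≤ s ≤ n+1} (n!/(n−s+1)!) · [n+1−s, k]_S, where n!/(n−s+1)! is the falling factorial n·(n−1)⋯(n−s+2) (in Lean: the sum over s in Finset.range (n+2) with s ∈ S of Nat.descFactorial n (s−1) · [n+1−s, k]_S). -/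
set_option linter.unusedSectionVars false


/-- Number of cycles of a permutation of `Fin n`, counting fixed points as cycles of length 1. -/
noncomputable def cycleCount {n : ℕ} (σ : Equiv.Perm (Fin n)) : ℕ :=
  σ.cycleType.card + (Finset.univ.filter fun x => σ x = x).card

/-- Generalized unsigned Stirling number of the first kind `[n,k]_S`: the number of
permutations of `{1,…,n}` with exactly `k` cycles (fixed points counting as cycles of
length 1), all of whose cycle lengths lie in `S`. -/
noncomputable def stirling1 (S : Set ℕ) (n k : ℕ) : ℕ :=
  Nat.card {σ : Equiv.Perm (Fin n) //
    cycleCount σ = k ∧ ∀ x, Function.minimalPeriod σ x ∈ S}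

open Equiv Equiv.Perm Function Finset

section OrbitBasics

variable {α : Type*} [Fintype α] [DecidableEq α]

/-- The orbit of `x` under `σ` as a finset. -/
def orbitSet (σ : Perm α) (x : α) : Finset α := univ.filter (σ.SameCycle x)

/-- The number of orbits (cycles, counting fixed points) of `σ`. -/
def orbitCount (σ : Perm α) : ℕ := (univ.image (orbitSet σ)).card

lemma mem_orbitSet {σ : Perm α} {x y : α} : y ∈ orbitSet σ x ↔ σ.SameCycle x y := by
  simp [orbitSet]

lemma self_mem_orbitSet (σ : Perm α) (x : α) : x ∈ orbitSet σ x :=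
  mem_orbitSet.2 (SameCycle.refl σ x)

lemma perm_mem_periodicPts (σ : Perm α) (x : α) : x ∈ periodicPts σ := by
  refine ⟨orderOf σ, orderOf_pos σ, ?_⟩
  show σ^[orderOf σ] x = x
  simp [Equiv.Perm.iterate_eq_pow, pow_orderOf_eq_one]

lemma perm_minimalPeriod_pos (σ : Perm α) (x : α) : 0 < minimalPeriod σ x :=
  minimalPeriod_pos_of_mem_periodicPts (perm_mem_periodicPts σ x)

lemma sameCycle_iff_exists_pow {σ : Perm α} {x y : α} :
    σ.SameCycle x y ↔ ∃ i : ℕ, (σ ^ i) x = y := by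
  constructor
  · intro h
    obtain ⟨i, _, hi⟩ := h.exists_pow_eq'
    exact ⟨i, hi⟩
  · rintro ⟨i, rfl⟩
    exact ⟨(i : ℤ), by simp [zpow_natCast]⟩

lemma SameCycle.minimalPeriod_eq' {σ : Perm α} {x y : α} (h : σ.SameCycle x y) :
    minimalPeriod σ x = minimalPeriod σ y := by
  obtain ⟨i, rfl⟩ := sameCycle_iff_exists_pow.1 h
  have := (minimalPeriod_apply_iterate (perm_mem_periodicPts σ x) i).symm
  simpa [Equiv.Perm.iterate_eq_pow] using this

lemma pow_minimalPeriod_apply (σ : Perm α) (x : α) :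
    (σ ^ minimalPeriod σ x) x = x := by
  have := Function.isPeriodicPt_minimalPeriod σ x
  rw [← Equiv.Perm.iterate_eq_pow]; exact this

lemma pow_ne_self_of_lt_minimalPeriod {σ : Perm α} {x : α} {i : ℕ} (hi : 0 < i)
    (hiT : i < minimalPeriod σ x) : (σ ^ i) x ≠ x := fun hc =>
  Function.not_isPeriodicPt_of_pos_of_lt_minimalPeriod hi.ne' hiT
    (show σ^[i] x = x by simpa [Equiv.Perm.iterate_eq_pow] using hc)

lemma orbitSet_eq_of_sameCycle {σ : Perm α} {x y : α} (h : σ.SameCycle x y) :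
    orbitSet σ x = orbitSet σ y := by
  ext z
  simp only [mem_orbitSet]
  exact ⟨fun hz => (h.symm).trans hz, fun hz => h.trans hz⟩

lemma orbitSet_fixed {σ : Perm α} {x : α} (h : σ x = x) : orbitSet σ x = {x} := by
  ext y
  simp only [mem_orbitSet, Finset.mem_singleton]
  constructor
  · intro hy
    obtain ⟨i, rfl⟩ := sameCycle_iff_exists_pow.1 hy
    have : (σ ^ i) x = x := (IsFixedPt.perm_pow h i :)
    rw [this]
  · rintro rfl; exact SameCycle.refl σ y

end OrbitBasics

section CycleCountEq

lemma filter_fixed_eq_compl_support {N : ℕ} (σ : Perm (Fin N)) :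
    (univ.filter fun x => σ x = x) = σ.supportᶜ := by
  ext x; simp [Equiv.Perm.mem_support]

lemma orbitSet_eq_support_cycleOf {N : ℕ} (σ : Perm (Fin N)) {x : Fin N}
    (hx : x ∈ σ.support) : orbitSet σ x = (σ.cycleOf x).support := by
  ext y
  rw [mem_orbitSet, Equiv.Perm.mem_support_cycleOf_iff]
  exact (and_iff_left hx).symm

lemma cycleCount_eq_orbitCount {N : ℕ} (σ : Perm (Fin N)) :
    cycleCount σ = orbitCount σ := by
  classical
  have himg : (univ : Finset (Fin N)).image (orbitSet σ)
      = σ.support.image (orbitSet σ) ∪ σ.supportᶜ.image (orbitSet σ) := by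
    rw [← Finset.image_union, Finset.union_compl]
  have h1 : σ.support.image (orbitSet σ)
      = σ.cycleFactorsFinset.image Equiv.Perm.support := by
    ext A
    simp only [Finset.mem_image]
    constructor
    · rintro ⟨x, hx, rfl⟩
      exact ⟨σ.cycleOf x, Equiv.Perm.cycleOf_mem_cycleFactorsFinset_iff.2 hx,
        (orbitSet_eq_support_cycleOf σ hx).symm⟩
    · rintro ⟨c, hc, rfl⟩
      obtain ⟨a, ha, -⟩ := (Equiv.Perm.mem_cycleFactorsFinset_iff.1 hc).1
      have ha' : a ∈ c.support := Equiv.Perm.mem_support.2 ha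
      have haσ : a ∈ σ.support := Equiv.Perm.mem_cycleFactorsFinset_support_le hc ha'
      have hceq : c = σ.cycleOf a := Equiv.Perm.cycle_is_cycleOf ha' hc
      exact ⟨a, haσ, by rw [orbitSet_eq_support_cycleOf σ haσ, ← hceq]⟩
  have hcard1 : (σ.cycleFactorsFinset.image Equiv.Perm.support).card
      = σ.cycleFactorsFinset.card := by
    apply Finset.card_image_of_injOn
    intro c1 hc1 c2 hc2 heq
    simp only [Finset.mem_coe] at hc1 hc2
    obtain ⟨a, ha, -⟩ := (Equiv.Perm.mem_cycleFactorsFinset_iff.1 hc1).1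
    have ha1 : a ∈ c1.support := Equiv.Perm.mem_support.2 ha
    have ha2 : a ∈ c2.support := heq ▸ ha1
    rw [Equiv.Perm.cycle_is_cycleOf ha1 hc1, Equiv.Perm.cycle_is_cycleOf ha2 hc2]
  have h2 : ∀ x ∈ σ.supportᶜ, orbitSet σ x = {x} := by
    intro x hx
    exact orbitSet_fixed (by simpa [Equiv.Perm.mem_support] using Finset.mem_compl.1 hx)
  have hcard2 : (σ.supportᶜ.image (orbitSet σ)).card = σ.supportᶜ.card := by
    rw [Finset.image_congr h2]
    exact Finset.card_image_of_injOn (fun a _ b _ h => by simpa using h)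
  have hdisj : Disjoint (σ.support.image (orbitSet σ)) (σ.supportᶜ.image (orbitSet σ)) := by
    rw [Finset.disjoint_left]
    intro A hA hA'
    simp only [Finset.mem_image] at hA hA'
    obtain ⟨x, hx, rfl⟩ := hA
    obtain ⟨z, hz, hzx⟩ := hA'
    rw [h2 z hz] at hzx
    have hx1 : x ∈ orbitSet σ x := self_mem_orbitSet σ x
    have hx2 : σ x ∈ orbitSet σ x := mem_orbitSet.2 ⟨1, by simp⟩
    rw [← hzx] at hx1 hx2
    simp only [Finset.mem_singleton] at hx1 hx2
    exact (Equiv.Perm.mem_support.1 hx) (by rw [hx2, hx1])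
  have hct : σ.cycleType.card = σ.cycleFactorsFinset.card := by
    rw [Equiv.Perm.cycleType_def, Multiset.card_map]
    rfl
  rw [cycleCount, hct, filter_fixed_eq_compl_support, orbitCount, himg,
    Finset.card_union_of_disjoint hdisj, h1, hcard1, hcard2]

end CycleCountEq

section Conj

variable {α : Type*} [Fintype α] [DecidableEq α]

lemma conj_pow_apply (π σ : Perm α) (n : ℕ) (x : α) :
    ((π * σ * π⁻¹) ^ n) (π x) = π ((σ ^ n) x) := by
  rw [conj_pow]
  simp [Equiv.Perm.mul_apply]

lemma minimalPeriod_conj (π σ : Perm α) (x : α) :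
    minimalPeriod (π * σ * π⁻¹) (π x) = minimalPeriod σ x := by
  rw [minimalPeriod_eq_minimalPeriod_iff]
  intro n
  show ((π * σ * π⁻¹) : Perm α)^[n] (π x) = π x ↔ (σ : Perm α)^[n] x = x
  simp only [Equiv.Perm.iterate_eq_pow]
  rw [conj_pow_apply]
  exact ⟨fun h => (Equiv.injective π) h, fun h => by rw [h]⟩

lemma sameCycle_conj_iff (π σ : Perm α) (x y : α) :
    (π * σ * π⁻¹).SameCycle (π x) (π y) ↔ σ.SameCycle x y := by
  rw [Equiv.Perm.sameCycle_conj]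
  simp

lemma orbitSet_conj (π σ : Perm α) (x : α) :
    orbitSet (π * σ * π⁻¹) (π x) = (orbitSet σ x).image π := by
  ext y
  obtain ⟨z, rfl⟩ := π.surjective y
  rw [mem_orbitSet, sameCycle_conj_iff]
  simp only [Finset.mem_image]
  constructor
  · intro h; exact ⟨z, mem_orbitSet.2 h, rfl⟩
  · rintro ⟨w, hw, hwz⟩
    have hz : w = z := π.injective hwz
    subst hz; exact mem_orbitSet.1 hw

lemma orbitCount_conj (π σ : Perm α) : orbitCount (π * σ * π⁻¹) = orbitCount σ := by
  classical
  have huniv : (univ : Finset α).image ⇑π = univ := Finset.image_univ_equiv π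
  have h1 : univ.image (orbitSet (π * σ * π⁻¹))
      = (univ.image (orbitSet σ)).image (fun A => A.image ⇑π) := by
    conv_lhs => rw [← huniv]
    rw [Finset.image_image, Finset.image_image]
    apply Finset.image_congr
    intro x _
    exact orbitSet_conj π σ x
  rw [orbitCount, orbitCount, h1,
    Finset.card_image_of_injective _ (Finset.image_injective π.injective)]

end Conj

section InsPerm

variable {m : ℕ}

/-- Insert `0` into the cycle of `e` just before `p'.succ`. -/
def insPerm (e : Perm (Fin (m + 1))) (p' : Fin (m + 1)) : Perm (Fin (m + 2)) :=
  Equiv.Perm.decomposeFin.symm (p'.succ, e)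

lemma insPerm_zero (e : Perm (Fin (m + 1))) (p' : Fin (m + 1)) :
    insPerm e p' 0 = p'.succ :=
  Equiv.Perm.decomposeFin_symm_apply_zero _ _

lemma insPerm_succ_of_ne (e : Perm (Fin (m + 1))) (p' : Fin (m + 1)) {x : Fin (m + 1)}
    (h : e x ≠ p') : insPerm e p' x.succ = (e x).succ := by
  rw [insPerm, Equiv.Perm.decomposeFin_symm_apply_succ]
  apply Equiv.swap_apply_of_ne_of_ne
  · exact Fin.succ_ne_zero _
  · simpa [Fin.succ_inj] using h

lemma insPerm_succ_of_eq (e : Perm (Fin (m + 1))) (p' : Fin (m + 1)) {x : Fin (m + 1)}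
    (h : e x = p') : insPerm e p' x.succ = 0 := by
  rw [insPerm, Equiv.Perm.decomposeFin_symm_apply_succ, h, Equiv.swap_apply_right]

lemma insPerm_pow_succ (e : Perm (Fin (m + 1))) (p' : Fin (m + 1)) (j : ℕ) (x : Fin (m + 1))
    (h : ∀ i, 0 < i → i ≤ j → (e ^ i) x ≠ p') :
    ((insPerm e p') ^ j) x.succ = ((e ^ j) x).succ := by
  induction j with
  | zero => simp
  | succ j ih =>
    have h1 : ((insPerm e p') ^ (j + 1)) x.succ
        = insPerm e p' (((insPerm e p') ^ j) x.succ) := by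
      rw [pow_succ', Equiv.Perm.mul_apply]
    rw [h1, ih (fun i hi hij => h i hi (le_trans hij (Nat.le_succ j))),
      insPerm_succ_of_ne]
    · rw [← Equiv.Perm.mul_apply, ← pow_succ']
    · intro hc
      exact h (j + 1) (Nat.succ_pos j) le_rfl (by rw [pow_succ', Equiv.Perm.mul_apply]; exact hc)

lemma not_sameCycle_pows {e : Perm (Fin (m + 1))} {p' x : Fin (m + 1)}
    (hx : ¬ e.SameCycle p' x) (i : ℕ) : (e ^ i) x ≠ p' := fun hc =>
  hx (Equiv.Perm.SameCycle.symm ⟨(i : ℤ), by simpa [zpow_natCast] using hc⟩)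

lemma insPerm_pow_succ' (e : Perm (Fin (m + 1))) (p' : Fin (m + 1)) {x : Fin (m + 1)}
    (hx : ∀ i : ℕ, (e ^ i) x ≠ p') (j : ℕ) :
    ((insPerm e p') ^ j) x.succ = ((e ^ j) x).succ :=
  insPerm_pow_succ e p' j x (fun i _ _ => hx i)

lemma minimalPeriod_insPerm_succ (e : Perm (Fin (m + 1))) (p' : Fin (m + 1)) {x : Fin (m + 1)}
    (hx : ¬ e.SameCycle p' x) :
    minimalPeriod (insPerm e p') x.succ = minimalPeriod e x := by
  rw [minimalPeriod_eq_minimalPeriod_iff]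
  intro n
  show ((insPerm e p') : Perm (Fin (m+2)))^[n] x.succ = x.succ ↔ (e : Perm (Fin (m+1)))^[n] x = x
  simp only [Equiv.Perm.iterate_eq_pow]
  rw [insPerm_pow_succ' e p' (not_sameCycle_pows hx) n]
  exact Fin.succ_inj

lemma insPerm_pow_zero (e : Perm (Fin (m + 1))) (p' : Fin (m + 1)) {j : ℕ}
    (hj : j < minimalPeriod e p') :
    ((insPerm e p') ^ (j + 1)) 0 = ((e ^ j) p').succ := by
  have h1 : ((insPerm e p') ^ (j + 1)) 0 = ((insPerm e p') ^ j) (insPerm e p' 0) := by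
    rw [pow_succ, Equiv.Perm.mul_apply]
  rw [h1, insPerm_zero, insPerm_pow_succ e p' j p'
    (fun i hi hij => pow_ne_self_of_lt_minimalPeriod hi (lt_of_le_of_lt hij hj))]

lemma minimalPeriod_insPerm_zero (e : Perm (Fin (m + 1))) (p' : Fin (m + 1)) :
    minimalPeriod (insPerm e p') 0 = minimalPeriod e p' + 1 := by
  have hTpos : 0 < minimalPeriod e p' := perm_minimalPeriod_pos e p'
  obtain ⟨t, ht⟩ : ∃ t, minimalPeriod e p' = t + 1 := ⟨minimalPeriod e p' - 1, by omega⟩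
  have hperiodic : Function.IsPeriodicPt (insPerm e p') (minimalPeriod e p' + 1) 0 := by
    show (insPerm e p' : Perm (Fin (m + 2)))^[minimalPeriod e p' + 1] 0 = 0
    simp only [Equiv.Perm.iterate_eq_pow]
    have h1 : ((insPerm e p') ^ (minimalPeriod e p' + 1)) 0
        = insPerm e p' (((insPerm e p') ^ (minimalPeriod e p')) 0) := by
      rw [pow_succ', Equiv.Perm.mul_apply]
    rw [h1, ht, insPerm_pow_zero e p' (j := t) (by omega)]
    apply insPerm_succ_of_eq
    rw [← Equiv.Perm.mul_apply, ← pow_succ', ← ht, pow_minimalPeriod_apply]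
  apply le_antisymm
  · exact hperiodic.minimalPeriod_le (Nat.succ_pos _)
  · by_contra hlt
    push_neg at hlt
    have hpos : 0 < minimalPeriod (insPerm e p') 0 := perm_minimalPeriod_pos _ _
    obtain ⟨j, hj⟩ : ∃ j, minimalPeriod (insPerm e p') 0 = j + 1 := ⟨minimalPeriod (insPerm e p') 0 - 1, by omega⟩
    have hMper : ((insPerm e p') ^ (minimalPeriod (insPerm e p') 0)) 0 = 0 :=
      pow_minimalPeriod_apply _ _
    rw [hj, insPerm_pow_zero e p' (j := j) (by omega)] at hMper
    exact Fin.succ_ne_zero _ hMper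

lemma sameCycle_insPerm_zero_iff (e : Perm (Fin (m + 1))) (p' : Fin (m + 1)) {y : Fin (m + 2)} :
    (insPerm e p').SameCycle 0 y ↔ y = 0 ∨ ∃ z, y = z.succ ∧ e.SameCycle p' z := by
  constructor
  · intro h
    obtain ⟨i, hi⟩ := sameCycle_iff_exists_pow.1 h
    have key : ∀ j, (((insPerm e p') ^ j) 0 = 0)
        ∨ ∃ z, ((insPerm e p') ^ j) 0 = z.succ ∧ e.SameCycle p' z := by
      intro j
      induction j with
      | zero => left; simp
      | succ j ih =>
        have hstep : ((insPerm e p') ^ (j + 1)) 0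
            = insPerm e p' (((insPerm e p') ^ j) 0) := by
          rw [pow_succ', Equiv.Perm.mul_apply]
        rcases ih with h0 | ⟨z, hz, hsc⟩
        · right
          exact ⟨p', by rw [hstep, h0, insPerm_zero], SameCycle.refl _ _⟩
        · by_cases hez : e z = p'
          · left; rw [hstep, hz, insPerm_succ_of_eq e p' hez]
          · right
            exact ⟨e z, by rw [hstep, hz, insPerm_succ_of_ne e p' hez],
              Equiv.Perm.sameCycle_apply_right.2 hsc⟩
    rcases key i with h0 | ⟨z, hz, hsc⟩
    · left; rw [← hi, h0]
    · right; exact ⟨z, by rw [← hi, hz], hsc⟩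
  · rintro (rfl | ⟨z, rfl, hsc⟩)
    · exact SameCycle.refl _ _
    · obtain ⟨i, hi⟩ := sameCycle_iff_exists_pow.1 hsc
      have hTpos : 0 < minimalPeriod e p' := perm_minimalPeriod_pos e p'
      have hmod : (e ^ (i % minimalPeriod e p')) p' = z := by
        have h := @Function.iterate_mod_minimalPeriod_eq _ e p' i
        simp only [Equiv.Perm.iterate_eq_pow] at h
        rw [← hi]
        exact h
      apply sameCycle_iff_exists_pow.2
      refine ⟨i % minimalPeriod e p' + 1, ?_⟩
      rw [insPerm_pow_zero e p' (Nat.mod_lt _ hTpos), hmod]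

lemma sameCycle_insPerm_succ_iff (e : Perm (Fin (m + 1))) (p' : Fin (m + 1)) {x : Fin (m + 1)}
    (hx : ¬ e.SameCycle p' x) {y : Fin (m + 2)} :
    (insPerm e p').SameCycle x.succ y ↔ ∃ z, y = z.succ ∧ e.SameCycle x z := by
  have hp : ∀ i : ℕ, (e ^ i) x ≠ p' := not_sameCycle_pows hx
  constructor
  · intro h
    obtain ⟨i, hi⟩ := sameCycle_iff_exists_pow.1 h
    rw [insPerm_pow_succ' e p' hp i] at hi
    exact ⟨(e ^ i) x, hi.symm, sameCycle_iff_exists_pow.2 ⟨i, rfl⟩⟩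
  · rintro ⟨z, rfl, hz⟩
    obtain ⟨i, hi⟩ := sameCycle_iff_exists_pow.1 hz
    exact sameCycle_iff_exists_pow.2 ⟨i, by rw [insPerm_pow_succ' e p' hp i, hi]⟩

/-- The map on orbits induced by inserting `0` into the cycle of `p'`. -/
def gmap (p' : Fin (m + 1)) (A : Finset (Fin (m + 1))) : Finset (Fin (m + 2)) :=
  if p' ∈ A then insert 0 (A.map (Fin.succEmb (m + 1))) else A.map (Fin.succEmb (m + 1))

lemma succ_map_ne_zero (A : Finset (Fin (m + 1))) :
    (0 : Fin (m + 2)) ∉ A.map (Fin.succEmb (m + 1)) := by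
  intro h
  obtain ⟨a, -, ha⟩ := Finset.mem_map.1 h
  exact Fin.succ_ne_zero a ha

lemma gmap_injective (p' : Fin (m + 1)) : Function.Injective (gmap p') := by
  intro A B hAB
  by_cases hA : p' ∈ A <;> by_cases hB : p' ∈ B
  · rw [gmap, if_pos hA, gmap, if_pos hB] at hAB
    apply Finset.map_injective (Fin.succEmb (m + 1))
    rw [← Finset.erase_insert (succ_map_ne_zero A), ← Finset.erase_insert (succ_map_ne_zero B),
      hAB]
  · rw [gmap, if_pos hA, gmap, if_neg hB] at hAB
    exact absurd (hAB ▸ Finset.mem_insert_self 0 _) (succ_map_ne_zero B)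
  · rw [gmap, if_neg hA, gmap, if_pos hB] at hAB
    exact absurd (hAB.symm ▸ Finset.mem_insert_self 0 _) (succ_map_ne_zero A)
  · rw [gmap, if_neg hA, gmap, if_neg hB] at hAB
    exact Finset.map_injective _ hAB

lemma orbitSet_insPerm_zero (e : Perm (Fin (m + 1))) (p' : Fin (m + 1)) :
    orbitSet (insPerm e p') 0 = gmap p' (orbitSet e p') := by
  rw [gmap, if_pos (self_mem_orbitSet e p')]
  ext y
  rw [mem_orbitSet, sameCycle_insPerm_zero_iff]
  simp only [Finset.mem_insert, Finset.mem_map, mem_orbitSet]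
  constructor
  · rintro (rfl | ⟨z, rfl, hz⟩)
    · left; rfl
    · right; exact ⟨z, hz, rfl⟩
  · rintro (rfl | ⟨z, hz, rfl⟩)
    · left; rfl
    · right; exact ⟨z, rfl, hz⟩

lemma orbitSet_insPerm_succ (e : Perm (Fin (m + 1))) (p' : Fin (m + 1)) (x : Fin (m + 1)) :
    orbitSet (insPerm e p') x.succ = gmap p' (orbitSet e x) := by
  by_cases hx : e.SameCycle p' x
  · have h1 : orbitSet (insPerm e p') x.succ = orbitSet (insPerm e p') 0 :=
      (orbitSet_eq_of_sameCycle
        ((sameCycle_insPerm_zero_iff e p').2 (Or.inr ⟨x, rfl, hx⟩))).symm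
    rw [h1, orbitSet_insPerm_zero, orbitSet_eq_of_sameCycle hx]
  · rw [gmap, if_neg (fun hmem => hx ((mem_orbitSet.1 hmem).symm))]
    ext y
    rw [mem_orbitSet, sameCycle_insPerm_succ_iff e p' hx]
    simp only [Finset.mem_map, mem_orbitSet]
    constructor
    · rintro ⟨z, rfl, hz⟩; exact ⟨z, hz, rfl⟩
    · rintro ⟨z, hz, rfl⟩; exact ⟨z, rfl, hz⟩

lemma univ_fin_succ_eq {M : ℕ} :
    (univ : Finset (Fin (M + 1))) = insert 0 (univ.map (Fin.succEmb M)) := by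
  ext y
  simp only [Finset.mem_univ, true_iff, Finset.mem_insert, Finset.mem_map]
  rcases Fin.eq_zero_or_eq_succ y with h | ⟨z, rfl⟩
  · left; exact h
  · right; exact ⟨z, trivial, rfl⟩

lemma orbitCount_insPerm (e : Perm (Fin (m + 1))) (p' : Fin (m + 1)) :
    orbitCount (insPerm e p') = orbitCount e := by
  classical
  rw [orbitCount, orbitCount, univ_fin_succ_eq, Finset.image_insert, Finset.map_eq_image,
    Finset.image_image]
  have hcomp : (univ : Finset (Fin (m + 1))).image (orbitSet (insPerm e p') ∘ (Fin.succEmb (m + 1)))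
      = (univ.image (orbitSet e)).image (gmap p') := by
    rw [Finset.image_image]
    exact Finset.image_congr (fun x _ => orbitSet_insPerm_succ e p' x)
  rw [hcomp, orbitSet_insPerm_zero,
    Finset.insert_eq_self.2
      (Finset.mem_image_of_mem _ (Finset.mem_image_of_mem _ (Finset.mem_univ p')))]
  exact Finset.card_image_of_injective _ (gmap_injective p')

end InsPerm

section ExtPerm

variable {m : ℕ}

/-- Extend a permutation of `Fin m` to `Fin (m+1)` fixing `0`. -/
def extPerm (e : Perm (Fin m)) : Perm (Fin (m + 1)) :=
  Equiv.Perm.decomposeFin.symm (0, e)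

lemma extPerm_zero (e : Perm (Fin m)) : extPerm e 0 = 0 :=
  Equiv.Perm.decomposeFin_symm_apply_zero _ _

lemma extPerm_succ (e : Perm (Fin m)) (x : Fin m) : extPerm e x.succ = (e x).succ := by
  rw [extPerm, Equiv.Perm.decomposeFin_symm_apply_succ]
  simp

lemma extPerm_pow_succ (e : Perm (Fin m)) (j : ℕ) (x : Fin m) :
    ((extPerm e) ^ j) x.succ = ((e ^ j) x).succ := by
  induction j with
  | zero => simp
  | succ j ih =>
    rw [pow_succ', Equiv.Perm.mul_apply, ih, extPerm_succ, ← Equiv.Perm.mul_apply, ← pow_succ']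

lemma minimalPeriod_extPerm_succ (e : Perm (Fin m)) (x : Fin m) :
    minimalPeriod (extPerm e) x.succ = minimalPeriod e x := by
  rw [minimalPeriod_eq_minimalPeriod_iff]
  intro n
  show ((extPerm e) : Perm (Fin (m+1)))^[n] x.succ = x.succ ↔ (e : Perm (Fin m))^[n] x = x
  simp only [Equiv.Perm.iterate_eq_pow]
  rw [extPerm_pow_succ]
  exact Fin.succ_inj

lemma minimalPeriod_extPerm_zero (e : Perm (Fin m)) : minimalPeriod (extPerm e) 0 = 1 :=
  Function.minimalPeriod_eq_one_iff_isFixedPt.2 (extPerm_zero e)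

lemma sameCycle_extPerm_zero_iff (e : Perm (Fin m)) {y : Fin (m + 1)} :
    (extPerm e).SameCycle 0 y ↔ y = 0 := by
  constructor
  · rintro ⟨i, hi⟩
    rw [← hi]
    exact (IsFixedPt.perm_zpow (extPerm_zero e) i :)
  · rintro rfl; exact SameCycle.refl _ _

lemma sameCycle_extPerm_succ_iff (e : Perm (Fin m)) {x : Fin m} {y : Fin (m + 1)} :
    (extPerm e).SameCycle x.succ y ↔ ∃ z, y = z.succ ∧ e.SameCycle x z := by
  constructor
  · intro h
    obtain ⟨i, hi⟩ := sameCycle_iff_exists_pow.1 h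
    rw [extPerm_pow_succ] at hi
    exact ⟨(e ^ i) x, hi.symm, sameCycle_iff_exists_pow.2 ⟨i, rfl⟩⟩
  · rintro ⟨z, rfl, hz⟩
    obtain ⟨i, hi⟩ := sameCycle_iff_exists_pow.1 hz
    exact sameCycle_iff_exists_pow.2 ⟨i, by rw [extPerm_pow_succ, hi]⟩

lemma orbitSet_extPerm_succ (e : Perm (Fin m)) (x : Fin m) :
    orbitSet (extPerm e) x.succ = (orbitSet e x).map (Fin.succEmb m) := by
  ext y
  rw [mem_orbitSet, sameCycle_extPerm_succ_iff]
  simp only [Finset.mem_map, mem_orbitSet]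
  constructor
  · rintro ⟨z, rfl, hz⟩; exact ⟨z, hz, rfl⟩
  · rintro ⟨z, hz, rfl⟩; exact ⟨z, rfl, hz⟩

lemma orbitCount_extPerm (e : Perm (Fin m)) : orbitCount (extPerm e) = orbitCount e + 1 := by
  classical
  rw [orbitCount, orbitCount, univ_fin_succ_eq, Finset.image_insert, Finset.map_eq_image,
    Finset.image_image]
  have hcomp : (univ : Finset (Fin m)).image (orbitSet (extPerm e) ∘ (Fin.succEmb m))
      = (univ.image (orbitSet e)).image (fun A => A.map (Fin.succEmb m)) := by
    rw [Finset.image_image]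
    exact Finset.image_congr (fun x _ => orbitSet_extPerm_succ e x)
  rw [hcomp, orbitSet_fixed (extPerm_zero e)]
  have hnotmem : ({0} : Finset (Fin (m + 1)))
      ∉ (univ.image (orbitSet e)).image (fun A => A.map (Fin.succEmb m)) := by
    intro hmem
    obtain ⟨A, hA, hA0⟩ := Finset.mem_image.1 hmem
    obtain ⟨x, -, rfl⟩ := Finset.mem_image.1 hA
    have hx : x.succ ∈ (orbitSet e x).map (Fin.succEmb m) :=
      Finset.mem_map_of_mem _ (self_mem_orbitSet e x)
    rw [hA0] at hx
    exact Fin.succ_ne_zero x (Finset.mem_singleton.1 hx)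
  rw [Finset.card_insert_of_notMem hnotmem,
    Finset.card_image_of_injective _ (Finset.map_injective _)]

end ExtPerm

section Counting

lemma minimalPeriod_le_card_s12 {N : ℕ} (σ : Perm (Fin (N + 1))) (x : Fin (N + 1)) :
    minimalPeriod σ x ≤ N + 1 := by
  have hinj : Function.Injective (fun j : Fin (minimalPeriod σ x) => (⇑σ)^[j.1] x) := by
    intro a b hab
    exact Fin.ext (Function.iterate_injOn_Iio_minimalPeriod a.isLt b.isLt hab)
  simpa using Fintype.card_le_of_injective _ hinj

lemma decomposeFin_fst {n : ℕ} (σ : Perm (Fin (n + 1))) :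
    (Equiv.Perm.decomposeFin σ).1 = σ 0 := by
  have h : Equiv.Perm.decomposeFin.symm (Equiv.Perm.decomposeFin σ) = σ :=
    Equiv.symm_apply_apply _ _
  conv_rhs => rw [← h]
  conv_rhs => rw [show Equiv.Perm.decomposeFin σ
    = ((Equiv.Perm.decomposeFin σ).1, (Equiv.Perm.decomposeFin σ).2) from rfl]
  rw [Equiv.Perm.decomposeFin_symm_apply_zero]

lemma ins_decompose {m : ℕ} (σ : Perm (Fin (m + 2))) (p' : Fin (m + 1)) (h : σ 0 = p'.succ) :
    insPerm (Equiv.Perm.decomposeFin σ).2 p' = σ := by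
  rw [insPerm, ← h, ← decomposeFin_fst]
  exact Equiv.symm_apply_apply _ _

lemma decomposeFin_insPerm {m : ℕ} (e : Perm (Fin (m + 1))) (p' : Fin (m + 1)) :
    Equiv.Perm.decomposeFin (insPerm e p') = (p'.succ, e) :=
  Equiv.apply_symm_apply _ _

lemma ext_decompose {m : ℕ} (σ : Perm (Fin (m + 1))) (h : σ 0 = 0) :
    extPerm (Equiv.Perm.decomposeFin σ).2 = σ := by
  rw [extPerm, ← h, ← decomposeFin_fst]
  exact Equiv.symm_apply_apply _ _

lemma decomposeFin_extPerm {m : ℕ} (e : Perm (Fin m)) :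
    Equiv.Perm.decomposeFin (extPerm e) = (0, e) :=
  Equiv.apply_symm_apply _ _

lemma nat_card_eq_sum_fiber {β : Type*} [Finite β] {N : ℕ} (f : β → Fin N) :
    Nat.card β = ∑ p : Fin N, Nat.card {b : β // f b = p} := by
  haveI := Fintype.ofFinite β
  classical
  calc Nat.card β = Nat.card (Σ p : Fin N, {b : β // f b = p}) :=
        (Nat.card_congr (Equiv.sigmaFiberEquiv f)).symm
    _ = ∑ p : Fin N, Nat.card {b : β // f b = p} := by
        simp [Nat.card_eq_fintype_card, Fintype.card_sigma]

variable (S : Set ℕ) [DecidablePred (· ∈ S)]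

/-- Count of permutations of `Fin (m+1)` whose marked point `p` lies on a cycle of
length `s`, all other cycles have length in `S`, and there are `k+1` cycles total. -/
noncomputable def QS (m s k : ℕ) (p : Fin (m + 1)) : ℕ :=
  Nat.card {σ : Perm (Fin (m + 1)) // minimalPeriod σ p = s ∧
    (∀ x, σ.SameCycle p x ∨ minimalPeriod σ x ∈ S) ∧ orbitCount σ = k + 1}

lemma QS_cond_conj {m s k : ℕ} (π σ : Perm (Fin (m + 1))) (p : Fin (m + 1)) :
    (minimalPeriod (π * σ * π⁻¹) (π p) = s ∧
      (∀ x, (π * σ * π⁻¹).SameCycle (π p) x ∨ minimalPeriod (π * σ * π⁻¹) x ∈ S) ∧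
      orbitCount (π * σ * π⁻¹) = k + 1)
    ↔ (minimalPeriod σ p = s ∧
      (∀ x, σ.SameCycle p x ∨ minimalPeriod σ x ∈ S) ∧ orbitCount σ = k + 1) := by
  rw [minimalPeriod_conj, orbitCount_conj]
  refine and_congr_right (fun _ => and_congr_left (fun _ => ?_))
  constructor
  · intro h x
    rcases h (π x) with hsc | hmp
    · left; exact (sameCycle_conj_iff π σ p x).1 hsc
    · right; rwa [minimalPeriod_conj] at hmp
  · intro h x
    obtain ⟨y, rfl⟩ := π.surjective x
    rcases h y with hsc | hmp
    · left; exact (sameCycle_conj_iff π σ p y).2 hsc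
    · right; rw [minimalPeriod_conj]; exact hmp

lemma QS_conj (m s k : ℕ) (p q : Fin (m + 1)) : QS S m s k p = QS S m s k q := by
  apply Nat.card_congr
  refine Equiv.subtypeEquiv (MulAut.conj (Equiv.swap p q)).toEquiv (fun σ => ?_)
  have h := (QS_cond_conj S (Equiv.swap p q) σ p (s := s) (k := k)).symm
  rw [Equiv.swap_apply_left p q] at h
  exact h

lemma stirling1_eq_orbitCount_card (N k : ℕ) :
    stirling1 S N k = Nat.card {σ : Perm (Fin N) //
      (∀ x, minimalPeriod σ x ∈ S) ∧ orbitCount σ = k} := by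
  apply Nat.card_congr
  apply Equiv.subtypeEquiv (Equiv.refl _)
  intro σ
  rw [cycleCount_eq_orbitCount]
  constructor
  · rintro ⟨h1, h2⟩; exact ⟨h2, h1⟩
  · rintro ⟨h1, h2⟩; exact ⟨h2, h1⟩

lemma extPerm_cond_iff {m k : ℕ} (e : Perm (Fin m)) :
    ((minimalPeriod (extPerm e) 0 = 1 ∧
      (∀ x, (extPerm e).SameCycle 0 x ∨ minimalPeriod (extPerm e) x ∈ S) ∧
      orbitCount (extPerm e) = k + 1) ∧ extPerm e 0 = 0)
    ↔ ((∀ x, minimalPeriod e x ∈ S) ∧ orbitCount e = k) := by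
  constructor
  · rintro ⟨⟨-, h2, h3⟩, -⟩
    rw [orbitCount_extPerm] at h3
    refine ⟨fun x => ?_, by omega⟩
    rcases h2 x.succ with hsc | hmp
    · exact absurd ((sameCycle_extPerm_zero_iff e).1 hsc) (Fin.succ_ne_zero x)
    · rwa [minimalPeriod_extPerm_succ] at hmp
  · rintro ⟨h1, h2⟩
    refine ⟨⟨minimalPeriod_extPerm_zero e, fun x => ?_,
      by rw [orbitCount_extPerm, h2]⟩, extPerm_zero e⟩
    rcases Fin.eq_zero_or_eq_succ x with rfl | ⟨y, rfl⟩
    · left; exact SameCycle.refl _ _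
    · right; rw [minimalPeriod_extPerm_succ]; exact h1 y

lemma QS_base (m k : ℕ) : QS S m 1 k 0 = stirling1 S m k := by
  rw [stirling1_eq_orbitCount_card, QS,
    nat_card_eq_sum_fiber (fun b => b.1 0), Fin.sum_univ_succ]
  have htail : ∀ p' : Fin m, Nat.card {b : {σ : Perm (Fin (m + 1)) //
      minimalPeriod σ 0 = 1 ∧ (∀ x, σ.SameCycle 0 x ∨ minimalPeriod σ x ∈ S) ∧
      orbitCount σ = k + 1} // b.1 0 = p'.succ} = 0 := by
    intro p'
    haveI : IsEmpty {b : {σ : Perm (Fin (m + 1)) //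
        minimalPeriod σ 0 = 1 ∧ (∀ x, σ.SameCycle 0 x ∨ minimalPeriod σ x ∈ S) ∧
        orbitCount σ = k + 1} // b.1 0 = p'.succ} := by
      refine ⟨fun b => ?_⟩
      have h1 : (b.1.1 : Perm (Fin (m + 1))) 0 = 0 :=
        Function.minimalPeriod_eq_one_iff_isFixedPt.1 b.1.2.1
      rw [b.2] at h1
      exact Fin.succ_ne_zero p' h1
    exact Nat.card_of_isEmpty
  rw [Finset.sum_congr rfl (fun p' _ => htail p'), Finset.sum_const, smul_zero, add_zero]
  apply Nat.card_congr
  refine (Equiv.subtypeSubtypeEquivSubtypeInter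
    (fun σ : Perm (Fin (m + 1)) => minimalPeriod σ 0 = 1 ∧
      (∀ x, σ.SameCycle 0 x ∨ minimalPeriod σ x ∈ S) ∧ orbitCount σ = k + 1)
    (fun σ => σ 0 = 0)).trans ?_
  exact
    { toFun := fun x => ⟨(Equiv.Perm.decomposeFin x.1).2,
        (extPerm_cond_iff S _).1 (by rw [ext_decompose x.1 x.2.2]; exact x.2)⟩
      invFun := fun y => ⟨extPerm y.1, (extPerm_cond_iff S y.1).2 y.2⟩
      left_inv := fun x => Subtype.ext (ext_decompose x.1 x.2.2)
      right_inv := fun y => Subtype.ext (by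
        show (Equiv.Perm.decomposeFin (extPerm y.1)).2 = y.1
        rw [decomposeFin_extPerm]) }

lemma insPerm_cond_iff {m : ℕ} (e : Perm (Fin (m + 1))) (p' : Fin (m + 1)) (s k : ℕ) :
    ((minimalPeriod (insPerm e p') 0 = s + 1 ∧
      (∀ x, (insPerm e p').SameCycle 0 x ∨ minimalPeriod (insPerm e p') x ∈ S) ∧
      orbitCount (insPerm e p') = k + 1) ∧ insPerm e p' 0 = p'.succ)
    ↔ (minimalPeriod e p' = s ∧
      (∀ x, e.SameCycle p' x ∨ minimalPeriod e x ∈ S) ∧ orbitCount e = k + 1) := by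
  constructor
  · rintro ⟨⟨h1, h2, h3⟩, -⟩
    rw [minimalPeriod_insPerm_zero] at h1
    refine ⟨by omega, fun x => ?_, by rwa [orbitCount_insPerm] at h3⟩
    by_cases hsc : e.SameCycle p' x
    · left; exact hsc
    · right
      rcases h2 x.succ with hsc' | hmp
      · rcases (sameCycle_insPerm_zero_iff e p').1 hsc' with h0 | ⟨z, hz, hzsc⟩
        · exact absurd h0 (Fin.succ_ne_zero x)
        · have hzx : z = x := Fin.succ_inj.1 hz.symm
          exact absurd (hzx ▸ hzsc) hsc
      · rwa [minimalPeriod_insPerm_succ e p' hsc] at hmp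
  · rintro ⟨h1, h2, h3⟩
    refine ⟨⟨by rw [minimalPeriod_insPerm_zero, h1], fun x => ?_,
      by rw [orbitCount_insPerm, h3]⟩, insPerm_zero e p'⟩
    rcases Fin.eq_zero_or_eq_succ x with rfl | ⟨y, rfl⟩
    · left; exact SameCycle.refl _ _
    · by_cases hsc : e.SameCycle p' y
      · left; exact (sameCycle_insPerm_zero_iff e p').2 (Or.inr ⟨y, rfl, hsc⟩)
      · right
        rw [minimalPeriod_insPerm_succ e p' hsc]
        exact (h2 y).resolve_left hsc

lemma QS_step (m s k : ℕ) (hs : 1 ≤ s) :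
    QS S (m + 1) (s + 1) k 0 = (m + 1) * QS S m s k 0 := by
  rw [QS, nat_card_eq_sum_fiber (fun b => b.1 0), Fin.sum_univ_succ]
  have h0 : Nat.card {b : {σ : Perm (Fin (m + 2)) //
      minimalPeriod σ 0 = s + 1 ∧ (∀ x, σ.SameCycle 0 x ∨ minimalPeriod σ x ∈ S) ∧
      orbitCount σ = k + 1} // b.1 0 = 0} = 0 := by
    haveI : IsEmpty {b : {σ : Perm (Fin (m + 2)) //
        minimalPeriod σ 0 = s + 1 ∧ (∀ x, σ.SameCycle 0 x ∨ minimalPeriod σ x ∈ S) ∧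
        orbitCount σ = k + 1} // b.1 0 = 0} := by
      refine ⟨fun b => ?_⟩
      have h1 : minimalPeriod (b.1.1 : Perm (Fin (m + 2))) 0 = 1 :=
        Function.minimalPeriod_eq_one_iff_isFixedPt.2 b.2
      have h2 := b.1.2.1
      rw [h1] at h2
      omega
    exact Nat.card_of_isEmpty
  rw [h0, zero_add]
  have hfib : ∀ p' : Fin (m + 1), Nat.card {b : {σ : Perm (Fin (m + 2)) //
      minimalPeriod σ 0 = s + 1 ∧ (∀ x, σ.SameCycle 0 x ∨ minimalPeriod σ x ∈ S) ∧
      orbitCount σ = k + 1} // b.1 0 = p'.succ} = QS S m s k 0 := by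
    intro p'
    have heq : Nat.card {b : {σ : Perm (Fin (m + 2)) //
        minimalPeriod σ 0 = s + 1 ∧ (∀ x, σ.SameCycle 0 x ∨ minimalPeriod σ x ∈ S) ∧
        orbitCount σ = k + 1} // b.1 0 = p'.succ} = QS S m s k p' := by
      apply Nat.card_congr
      refine (Equiv.subtypeSubtypeEquivSubtypeInter
        (fun σ : Perm (Fin (m + 2)) => minimalPeriod σ 0 = s + 1 ∧
          (∀ x, σ.SameCycle 0 x ∨ minimalPeriod σ x ∈ S) ∧ orbitCount σ = k + 1)
        (fun σ => σ 0 = p'.succ)).trans ?_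
      exact
        { toFun := fun x => ⟨(Equiv.Perm.decomposeFin x.1).2,
            (insPerm_cond_iff S _ p' s k).1 (by rw [ins_decompose x.1 p' x.2.2]; exact x.2)⟩
          invFun := fun y => ⟨insPerm y.1 p', (insPerm_cond_iff S y.1 p' s k).2 y.2⟩
          left_inv := fun x => Subtype.ext (ins_decompose x.1 p' x.2.2)
          right_inv := fun y => Subtype.ext (by
            show (Equiv.Perm.decomposeFin (insPerm y.1 p')).2 = y.1
            rw [decomposeFin_insPerm]) }
    rw [heq, QS_conj S m s k p' 0]
  rw [Finset.sum_congr rfl (fun p' _ => hfib p'), Finset.sum_const, Finset.card_univ]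
  simp [mul_comm]

lemma QS_key : ∀ s n k : ℕ, s ≤ n → QS S n (s + 1) k 0
    = Nat.descFactorial n s * stirling1 S (n - s) k := by
  intro s
  induction s with
  | zero => intro n k _; simpa using QS_base S n k
  | succ s ih =>
    intro n k hsn
    obtain ⟨m, rfl⟩ : ∃ m, n = m + 1 := ⟨n - 1, by omega⟩
    rw [QS_step S m (s + 1) k (Nat.succ_pos s), ih m k (by omega),
      Nat.succ_descFactorial_succ]
    have h2 : m + 1 - (s + 1) = m - s := by omega
    rw [h2, Nat.mul_assoc]

end Counting

theorem statement12 (S : Set ℕ) [DecidablePred (· ∈ S)] (hS : 0 ∉ S) (n k : ℕ) :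
    stirling1 S (n + 1) (k + 1) =
      ∑ s ∈ (Finset.range (n + 2)).filter (· ∈ S),
        Nat.descFactorial n (s - 1) * stirling1 S (n + 1 - s) k := by
  classical
  rw [stirling1_eq_orbitCount_card,
    nat_card_eq_sum_fiber (fun b => (⟨minimalPeriod b.1 0,
      Nat.lt_succ_of_le (minimalPeriod_le_card_s12 b.1 0)⟩ : Fin (n + 2)))]
  have hfib : ∀ p : Fin (n + 2), Nat.card {b : {σ : Perm (Fin (n + 1)) //
      (∀ x, minimalPeriod σ x ∈ S) ∧ orbitCount σ = k + 1} //
      (⟨minimalPeriod b.1 0, Nat.lt_succ_of_le (minimalPeriod_le_card_s12 b.1 0)⟩ : Fin (n + 2)) = p}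
      = Nat.card {σ : Perm (Fin (n + 1)) //
        ((∀ x, minimalPeriod σ x ∈ S) ∧ orbitCount σ = k + 1) ∧ minimalPeriod σ 0 = p.1} := by
    intro p
    apply Nat.card_congr
    refine Equiv.trans ?_ (Equiv.subtypeSubtypeEquivSubtypeInter
      (fun σ : Perm (Fin (n + 1)) => (∀ x, minimalPeriod σ x ∈ S) ∧ orbitCount σ = k + 1)
      (fun σ => minimalPeriod σ 0 = p.1))
    exact Equiv.subtypeEquivRight (fun b => by simp [Fin.ext_iff])
  rw [Finset.sum_congr rfl (fun p _ => hfib p)]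
  rw [Fin.sum_univ_eq_sum_range (fun s : ℕ => Nat.card {σ : Perm (Fin (n + 1)) //
      ((∀ x, minimalPeriod σ x ∈ S) ∧ orbitCount σ = k + 1) ∧ minimalPeriod σ 0 = s}) (n + 2)]
  have hterm : ∀ s ∈ Finset.range (n + 2),
      Nat.card {σ : Perm (Fin (n + 1)) //
        ((∀ x, minimalPeriod σ x ∈ S) ∧ orbitCount σ = k + 1) ∧ minimalPeriod σ 0 = s}
      = if s ∈ S then Nat.descFactorial n (s - 1) * stirling1 S (n + 1 - s) k else 0 := by
    intro s hsr
    rw [Finset.mem_range] at hsr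
    by_cases hsS : s ∈ S
    · rw [if_pos hsS]
      obtain ⟨s', rfl⟩ : ∃ s', s = s' + 1 :=
        ⟨s - 1, by have : s ≠ 0 := fun h => hS (h ▸ hsS); omega⟩
      have hQ : Nat.card {σ : Perm (Fin (n + 1)) //
          ((∀ x, minimalPeriod σ x ∈ S) ∧ orbitCount σ = k + 1) ∧ minimalPeriod σ 0 = s' + 1}
          = QS S n (s' + 1) k 0 := by
        apply Nat.card_congr
        apply Equiv.subtypeEquivRight
        intro σ
        constructor
        · rintro ⟨⟨h1, h2⟩, h3⟩
          exact ⟨h3, fun x => Or.inr (h1 x), h2⟩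
        · rintro ⟨h1, h2, h3⟩
          refine ⟨⟨fun x => ?_, h3⟩, h1⟩
          rcases h2 x with hsc | hmp
          · rw [← SameCycle.minimalPeriod_eq' hsc, h1]; exact hsS
          · exact hmp
      rw [hQ, QS_key S s' n k (by omega)]
      simp [Nat.succ_sub_succ]
    · rw [if_neg hsS]
      haveI : IsEmpty {σ : Perm (Fin (n + 1)) //
          ((∀ x, minimalPeriod σ x ∈ S) ∧ orbitCount σ = k + 1) ∧ minimalPeriod σ 0 = s} :=
        ⟨fun b => hsS (by rw [← b.2.2]; exact b.2.1.1 0)⟩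
      exact Nat.card_of_isEmpty
  rw [Finset.sum_congr rfl hterm, ← Finset.sum_filter]
end
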